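/- For each z ∈ I_* fix a reduced I_*-expression σ of z and define σ_z accordingly. Then the map σ_*: z ↦ σ_z is an injection from I_* into W; that is, σ_{z_1} = σ_{z_2} if and only if z_1 = z_2. -/

import Mathlib

set_option synthInstance.maxHeartbeats 1000000
set_option maxHeartbeats 2000000

open scoped Classical TensorProduct

noncomputable section

namespace IUIM

/-- The field `ℚ(u)` of rational functions; `u` is `RatFunc.X`. -/
abbrev Fq : Type := RatFunc ℚ

/-- The Laurent polynomial subring `ℤ[u, u⁻¹]` of `ℚ(u)`. -/
def Ar : Subring Fq := Subring.closure {RatFunc.X, (RatFunc.X)⁻¹}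

/-- The subring `A₋₁ = ℤ[u, u⁻¹, (u+1)⁻¹]` of `ℚ(u)`. -/
def Am1 : Subring Fq := Subring.closure {RatFunc.X, (RatFunc.X)⁻¹, (RatFunc.X + 1)⁻¹}

/-- The subring `A±₁ = ℤ[u, u⁻¹, (u+1)⁻¹, (u-1)⁻¹]` of `ℚ(u)`. -/
def Apm : Subring Fq :=
  Subring.closure {RatFunc.X, (RatFunc.X)⁻¹, (RatFunc.X + 1)⁻¹, (RatFunc.X - 1)⁻¹}

lemma X_mem_Am1 : (RatFunc.X : Fq) ∈ Am1 := Subring.subset_closure (by simp)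
lemma X_mem_Apm : (RatFunc.X : Fq) ∈ Apm := Subring.subset_closure (by simp)

/-- `u` as an element of `A±₁`. -/
def uApm : ↥Apm := ⟨RatFunc.X, X_mem_Apm⟩
/-- `u` as an element of `A₋₁`. -/
def uAm1 : ↥Am1 := ⟨RatFunc.X, X_mem_Am1⟩

variable {B W : Type*} [Group W] {M : CoxeterMatrix B} (cs : CoxeterSystem M W) (star : W ≃* W)

/-- The Bruhat order on `W`, via the subword property: `x ≤ w` iff some reduced word
for `w` contains a reduced word for `x` as a subword. -/
def BruhatLE (x w : W) : Prop :=
  ∃ ω : List B, cs.IsReduced ω ∧ cs.wordProd ω = w ∧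
    ∃ ω' : List B, ω'.Sublist ω ∧ cs.IsReduced ω' ∧ cs.wordProd ω' = x

/-- The strict Bruhat order. -/
def BruhatLT (x w : W) : Prop := BruhatLE cs x w ∧ x ≠ w

/-- The twisted product `s ⋉ w`: it is `s*w` if `s*w = w*s^*`, and `s*w*s^*` otherwise. -/
def twMul (i : B) (w : W) : W :=
  if cs.simple i * w = w * star (cs.simple i) then cs.simple i * w
  else cs.simple i * w * star (cs.simple i)

/-- `twProd [i₁,...,iₖ] = sᵢ₁ ⋉ (sᵢ₂ ⋉ ( ⋯ ⋉ (sᵢₖ ⋉ 1)))`. -/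
def twProd (ω : List B) : W := ω.foldr (twMul cs star) 1

/-- The minimal length of an `I⋆`-expression for `w` (the rank function `ρ`). -/
def rho (w : W) : ℕ := sInf {k | ∃ ω : List B, ω.length = k ∧ twProd cs star ω = w}

/-- `ω` is a reduced `I⋆`-expression for `w`: its twisted product is `w` and it has
minimal length among all such expressions. -/
def IsRedI (ω : List B) (w : W) : Prop :=
  twProd cs star ω = w ∧ ∀ ω' : List B, twProd cs star ω' = w → ω.length ≤ ω'.length

/-- The statistic `ℓ^*` computed from a word `(i₁, …, i_k)`: the number of indices `t`
such that `s_{i_t} w_t = w_t (s_{i_t})^*`, where `w_t = s_{i_t} ⋉ ⋯ ⋉ s_{i_1} ⋉ w` is the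
corresponding tail twisted product `s_{i_{t+1}} ⋉ ⋯ ⋉ s_{i_k} ⋉ 1`. -/
def lstarWord : List B → ℕ
  | [] => 0
  | i :: ω =>
      (if cs.simple i * twProd cs star ω = twProd cs star ω * star (cs.simple i) then 1 else 0)
        + lstarWord ω

lemma twMul_mem (hst : ∀ v, star (star v) = v) (i : B) {w : W} (hw : star w = w⁻¹) :
    star (twMul cs star i w) = (twMul cs star i w)⁻¹ := by
  unfold twMul
  split_ifs with h
  · have h2 : star (cs.simple i) = w⁻¹ * (cs.simple i * w) := by rw [h]; group
    rw [map_mul, hw, h2, mul_inv_rev, cs.inv_simple i]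
    group
  · have hs : star (cs.simple i) * star (cs.simple i) = 1 := by
      rw [← map_mul, cs.simple_mul_simple_self, map_one]
    have hsinv : (star (cs.simple i))⁻¹ = star (cs.simple i) := by
      exact (eq_inv_of_mul_eq_one_left hs).symm
    rw [map_mul, map_mul, hw, hst, mul_inv_rev, mul_inv_rev, hsinv, cs.inv_simple i]
    group

/-- `s ⋉ w` as a twisted involution. -/
def twK (hst : ∀ v, star (star v) = v) (i : B) (z : {w : W // star w = w⁻¹}) :
    {w : W // star w = w⁻¹} :=
  ⟨twMul cs star i z.1, twMul_mem cs star hst i z.2⟩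

/-- The identity element as a twisted involution. -/
def oneI : {w : W // star w = w⁻¹} := ⟨1, by simp⟩

/-- `T` is the standard basis of an Iwahori–Hecke algebra with Hecke parameter `u ^ 2`
(over a ground ring `R`, with `u ∈ R`): `T_w T_{w'} = T_{w w'}` whenever lengths add, and
`(T_s + 1)(T_s - u²) = 0` for all simple reflections `s`. -/
def IsHecke {R H : Type*} [CommRing R] [Ring H] [Algebra R H] (u : R) (T : Module.Basis W R H) :
    Prop :=
  T 1 = 1 ∧
  (∀ x y : W, cs.length (x * y) = cs.length x + cs.length y → T x * T y = T (x * y)) ∧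
  (∀ i : B, (T (cs.simple i) + 1) * (T (cs.simple i) - algebraMap R H (u ^ 2)) = 0)

/-- The Lusztig–Vogan rules for the `u`-deformed involution module: the requirements on
the action `act` of the standard basis elements `T_s` on the basis vectors `e z = a_z`
indexed by the twisted involutions. -/
def LVRules {R Mu : Type*} [CommRing R] [AddCommGroup Mu] [Module R Mu]
    (hst : ∀ v, star (star v) = v) (u : R)
    (e : {w : W // star w = w⁻¹} → Mu) (act : W → Mu → Mu) : Prop :=
  ∀ (i : B) (z : {w : W // star w = w⁻¹}),
    (cs.simple i * z.1 = z.1 * star (cs.simple i) →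
        BruhatLT cs z.1 (cs.simple i * z.1) →
      act (cs.simple i) (e z) = u • e z + (u + 1) • e (twK cs star hst i z)) ∧
    (cs.simple i * z.1 = z.1 * star (cs.simple i) →
        BruhatLT cs (cs.simple i * z.1) z.1 →
      act (cs.simple i) (e z) =
        (u ^ 2 - u - 1) • e z + (u ^ 2 - u) • e (twK cs star hst i z)) ∧
    (cs.simple i * z.1 ≠ z.1 * star (cs.simple i) →
        BruhatLT cs z.1 (cs.simple i * z.1) →
      act (cs.simple i) (e z) = e (twK cs star hst i z)) ∧
    (cs.simple i * z.1 ≠ z.1 * star (cs.simple i) →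
        BruhatLT cs (cs.simple i * z.1) z.1 →
      act (cs.simple i) (e z) = (u ^ 2 - 1) • e z + u ^ 2 • e (twK cs star hst i z))

/-- The action of the Hecke algebra on the space `Hh` of all formal (possibly infinite)
sums `∑ c_x T_x`, described in coordinates: the `x`-coordinate of `h • ξ` is
`∑ᶠ y, ξ_y ⬝ (coefficient of T_x in h ⬝ T_y)`. -/
def IsHatAction {R H : Type*} [CommRing R] [Ring H] [Algebra R H] (T : Module.Basis W R H)
    {Hh : Type*} [AddCommGroup Hh] [Module R Hh] [Module H Hh]
    (coords : Hh ≃ₗ[R] (W → R)) : Prop :=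
  ∀ (h : H) (ξ : Hh) (x : W), coords (h • ξ) x = ∑ᶠ y : W, coords ξ y * (T.repr (h * T y) x)

/-- The `R`-span (for a subring `R ⊆ ℚ(u)`) of a family of vectors in a `ℚ(u)`-vector
space; used for the various integral forms. -/
def MA {ι V : Type*} [AddCommGroup V] [Module Fq V] (R : Subring Fq) (v : ι → V) :
    Submodule (↥R) V :=
  Submodule.span (↥R) (Set.range v)

/-- The canonical element `1 ⊗ v z` of the base change `K ⊗_R (R-span of v)`. -/
def bce {ι V : Type*} [AddCommGroup V] [Module Fq V] (R : Subring Fq) (K : Type*)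
    [CommRing K] [Algebra (↥R) K] (v : ι → V) (z : ι) :
    TensorProduct (↥R) K ↥(MA R v) :=
  (1 : K) ⊗ₜ[↥R] (⟨v z, Submodule.subset_span (Set.mem_range_self z)⟩ : ↥(MA R v))

/-- Right multiplication/action on a fixed element `Ξ` (e.g. `X_∅`), as a
`ℚ(u)`-linear map `h ↦ h • Ξ`. -/
def smulXeF {H V : Type*} [Ring H] [Algebra Fq H] [AddCommGroup V] [Module Fq V]
    [Module H V] [IsScalarTower Fq H V] (Ξ : V) : H →ₗ[Fq] V where
  toFun h := h • Ξ
  map_add' h h' := add_smul h h' Ξ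
  map_smul' c h := by simp [smul_assoc]

/-- The integral form `H_{R,u} X_∅`: the image of the `R`-span of the `T_w` under
`h ↦ h • Ξ`. -/
def NX {ι H V : Type*} [Ring H] [Algebra Fq H] [AddCommGroup V] [Module Fq V]
    [Module H V] [IsScalarTower Fq H V] (R : Subring Fq) (Tv : ι → H) (Ξ : V) :
    Submodule (↥R) V :=
  Submodule.map ((smulXeF Ξ).restrictScalars (↥R)) (Submodule.span (↥R) (Set.range Tv))

section DevIUIM

open CoxeterSystem List

/-- parity count of `t` in a list -/
def cntZ (t : W) : List W → ZMod 2
  | [] => 0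
  | a :: l => (if a = t then 1 else 0) + cntZ t l

@[simp] lemma cntZ_nil (t : W) : cntZ t ([] : List W) = 0 := rfl

@[simp] lemma cntZ_cons (t a : W) (l : List W) :
    cntZ t (a :: l) = (if a = t then 1 else 0) + cntZ t l := rfl

lemma cntZ_append (t : W) (l₁ l₂ : List W) :
    cntZ t (l₁ ++ l₂) = cntZ t l₁ + cntZ t l₂ := by
  induction l₁ with
  | nil => simp
  | cons a l ih => simp [ih, add_assoc]

lemma cntZ_reverse (t : W) (l : List W) : cntZ t l.reverse = cntZ t l := by
  induction l with
  | nil => rfl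
  | cons a l ih => simp [cntZ_append, ih, add_comm]

lemma cntZ_map_conj (t q : W) (l : List W) :
    cntZ t (l.map (fun r => q * r * q⁻¹)) = cntZ (q⁻¹ * t * q) l := by
  induction l with
  | nil => rfl
  | cons a l ih =>
      simp only [List.map_cons, cntZ_cons, ih]
      congr 1
      have : (q * a * q⁻¹ = t) ↔ (a = q⁻¹ * t * q) := by
        constructor
        · intro h; rw [← h]; group
        · intro h; rw [h]; group
      simp [this]

lemma mem_of_cntZ_eq_one {t : W} {l : List W} (h : cntZ t l = 1) : t ∈ l := by
  induction l with
  | nil => simp [cntZ] at h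
  | cons a l ih =>
      by_cases ha : a = t
      · subst ha; exact List.mem_cons_self
      · simp only [cntZ_cons, if_neg ha, zero_add] at h
        exact List.mem_cons_of_mem _ (ih h)

lemma cntZ_eq_zero_of_not_mem {t : W} {l : List W} (h : t ∉ l) : cntZ t l = 0 := by
  induction l with
  | nil => rfl
  | cons a l ih =>
      have ha : ¬(a = t) := fun hh => h (hh ▸ List.mem_cons_self)
      simp only [cntZ_cons, if_neg ha, zero_add]
      exact ih (fun hh => h (List.mem_cons_of_mem _ hh))

/-! ### inversion sequence extras -/

lemma ris_append (ω₁ ω₂ : List B) :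
    cs.rightInvSeq (ω₁ ++ ω₂) =
      (cs.rightInvSeq ω₁).map (fun t => (cs.wordProd ω₂)⁻¹ * t * (cs.wordProd ω₂))
        ++ cs.rightInvSeq ω₂ := by
  induction ω₁ with
  | nil => simp [rightInvSeq]
  | cons i ω₁ ih =>
      show ((cs.wordProd (ω₁ ++ ω₂))⁻¹ * cs.simple i * cs.wordProd (ω₁ ++ ω₂))
            :: cs.rightInvSeq (ω₁ ++ ω₂) = _
      rw [ih]
      simp only [rightInvSeq, List.map_cons, List.cons_append]
      congr 1
      rw [cs.wordProd_append]
      group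

lemma lis_eq_map_conj_ris (ω : List B) :
    cs.leftInvSeq ω =
      (cs.rightInvSeq ω).map (fun t => cs.wordProd ω * t * (cs.wordProd ω)⁻¹) := by
  induction ω with
  | nil => simp [leftInvSeq, rightInvSeq]
  | cons i ω ih =>
      show cs.simple i :: (cs.leftInvSeq ω).map (MulAut.conj (cs.simple i)) = _
      simp only [rightInvSeq, List.map_cons]
      congr 1
      · rw [cs.wordProd_cons]; group
      · rw [ih, List.map_map]
        apply List.map_congr_left
        intro t _
        simp only [Function.comp_apply, MulAut.conj_apply, cs.wordProd_cons]
        group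



lemma conj_cancel (i : B) (x : W) :
    cs.simple i * (cs.simple i * x * cs.simple i) * cs.simple i = x := by
  calc cs.simple i * (cs.simple i * x * cs.simple i) * cs.simple i
      = (cs.simple i * (cs.simple i * (x * cs.simple i))) * cs.simple i := by group
    _ = x * cs.simple i * cs.simple i := by rw [cs.simple_mul_simple_cancel_left]
    _ = x := by rw [cs.simple_mul_simple_cancel_right]

lemma conj_eq_simple_iff (i : B) (x : W) :
    (cs.simple i * x * cs.simple i = cs.simple i) ↔ x = cs.simple i := by
  constructor
  · intro h
    have h2 := congrArg (fun y => cs.simple i * y * cs.simple i) h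
    rw [conj_cancel] at h2
    rw [h2, cs.simple_mul_simple_self, one_mul]
  · intro h
    rw [h, cs.simple_mul_simple_self, one_mul]

lemma mul_conj_cancel_iff (A X Y : W) :
    (A⁻¹ * X * A = A⁻¹ * Y * A) ↔ X = Y := by
  constructor
  · intro h
    have h1 : A⁻¹ * X = A⁻¹ * Y := mul_right_cancel h
    exact mul_left_cancel h1
  · intro h; rw [h]

/-- underlying set for the parity representation -/
abbrev RX := ({t : W // cs.IsReflection t} × ZMod 2)

lemma RXext {a c : {t : W // cs.IsReflection t}} {b d : ZMod 2}
    (h1 : a.1 = c.1) (h2 : b = d) : ((a, b) : RX cs) = (c, d) := by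
  subst h2
  congr 1
  exact Subtype.ext h1

lemma refl_conj_simple (i : B) {t : W} (ht : cs.IsReflection t) :
    cs.IsReflection (cs.simple i * t * cs.simple i) := by
  have := ht.conj (cs.simple i)
  rwa [cs.inv_simple] at this

def peFun (i : B) : RX cs → RX cs := fun p =>
  (⟨cs.simple i * p.1.1 * cs.simple i, refl_conj_simple cs i p.1.2⟩,
   p.2 + if p.1.1 = cs.simple i then 1 else 0)

lemma peFun_apply (i : B) (t : {t : W // cs.IsReflection t}) (ε : ZMod 2) :
    peFun cs i (t, ε) =
      (⟨cs.simple i * t.1 * cs.simple i, refl_conj_simple cs i t.2⟩,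
       ε + if t.1 = cs.simple i then 1 else 0) := rfl

lemma peFun_invol (i : B) : Function.Involutive (peFun cs i) := by
  rintro ⟨t, ε⟩
  rw [peFun_apply, peFun_apply]
  apply RXext
  · exact conj_cancel cs i t.1
  · rw [conj_eq_simple_iff]
    by_cases h : t.1 = cs.simple i
    · rw [if_pos h, add_assoc, show ((1:ZMod 2) + 1) = 0 from by decide, add_zero]
    · rw [if_neg h, add_zero, add_zero]

def pe (i : B) : Equiv.Perm (RX cs) := (peFun_invol cs i).toPerm

lemma pe_apply (i : B) (p : RX cs) : pe cs i p = peFun cs i p := rfl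

lemma pe_mul_self (i : B) : pe cs i * pe cs i = 1 := by
  refine Equiv.ext fun p => ?_
  rw [Equiv.Perm.mul_apply, pe_apply, pe_apply]
  exact peFun_invol cs i p

lemma pe_inv (i : B) : (pe cs i)⁻¹ = pe cs i :=
  (eq_inv_of_mul_eq_one_left (pe_mul_self cs i)).symm

/-- the reflections `(s_{i'} s_i)^k s_{i'}` of the dihedral subgroup -/
def Rk (i i' : B) (k : ℕ) : W := (cs.simple i' * cs.simple i) ^ k * cs.simple i'

lemma Rk_conj (i i' : B) (k : ℕ) :
    (cs.simple i * cs.simple i')⁻¹ * Rk cs i i' k * (cs.simple i * cs.simple i') =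
      Rk cs i i' (k + 2) := by
  unfold Rk
  have h1 : (cs.simple i * cs.simple i')⁻¹ = cs.simple i' * cs.simple i := by
    rw [mul_inv_rev, cs.inv_simple, cs.inv_simple]
  have key : cs.simple i' * (cs.simple i * cs.simple i') =
      (cs.simple i' * cs.simple i) * cs.simple i' := by group
  rw [h1]
  calc (cs.simple i' * cs.simple i) * ((cs.simple i' * cs.simple i) ^ k * cs.simple i') *
        (cs.simple i * cs.simple i')
      = ((cs.simple i' * cs.simple i) * (cs.simple i' * cs.simple i) ^ k) *
          (cs.simple i' * (cs.simple i * cs.simple i')) := by group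
    _ = (cs.simple i' * cs.simple i) ^ (k+1) * ((cs.simple i' * cs.simple i) * cs.simple i') := by
        rw [← pow_succ', key]
    _ = ((cs.simple i' * cs.simple i) ^ (k+1) * (cs.simple i' * cs.simple i)) * cs.simple i' := by
        group
    _ = (cs.simple i' * cs.simple i) ^ (k+2) * cs.simple i' := by rw [← pow_succ]

/-- indicator sum -/
def SZ (i i' : B) (t : W) (n : ℕ) : ZMod 2 :=
  ∑ k ∈ Finset.range n, (if t = Rk cs i i' k then (1 : ZMod 2) else 0)

lemma sum_shift_two (f : ℕ → ZMod 2) (N : ℕ) :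
    ∑ k ∈ Finset.range (N + 2), f k
      = (∑ k ∈ Finset.range N, f (k + 2)) + (f 0 + f 1) := by
  rw [Finset.sum_range_succ' f (N+1), Finset.sum_range_succ' (fun k => f (k+1)) N]
  show (∑ k ∈ Finset.range N, f (k+2)) + f 1 + f 0 = _
  rw [add_assoc, add_comm (f 1) (f 0)]

lemma pe_pow_apply (i i' : B) (n : ℕ) (t : {t : W // cs.IsReflection t}) (ε : ZMod 2) :
    ((pe cs i * pe cs i') ^ n) (t, ε) =
      (⟨(cs.simple i * cs.simple i') ^ n * t.1 * ((cs.simple i * cs.simple i') ^ n)⁻¹,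
        t.2.conj _⟩,
       ε + SZ cs i i' t.1 (2 * n)) := by
  induction n generalizing t ε with
  | zero =>
      simp only [pow_zero, Equiv.Perm.one_apply, SZ, mul_zero, Finset.range_zero,
        Finset.sum_empty, add_zero]
      apply (RXext cs _ rfl).symm
      simp
  | succ n ih =>
      rw [pow_succ, Equiv.Perm.mul_apply]
      have hq : (pe cs i * pe cs i') ((t, ε) : RX cs) =
          (⟨(cs.simple i * cs.simple i') * t.1 * ((cs.simple i * cs.simple i'))⁻¹,
            t.2.conj _⟩,
           ε + ((if t.1 = Rk cs i i' 0 then (1:ZMod 2) else 0)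
                + (if t.1 = Rk cs i i' 1 then (1:ZMod 2) else 0))) := by
        rw [Equiv.Perm.mul_apply, pe_apply, pe_apply, peFun_apply, peFun_apply]
        apply RXext
        · simp only
          rw [mul_inv_rev, cs.inv_simple, cs.inv_simple]
          group
        · have e0 : (t.1 = cs.simple i') ↔ (t.1 = Rk cs i i' 0) := by
            unfold Rk; rw [pow_zero, one_mul]
          have e1 : (cs.simple i' * t.1 * cs.simple i' = cs.simple i) ↔
              (t.1 = Rk cs i i' 1) := by
            unfold Rk
            rw [pow_one]
            constructor
            · intro h
              have h2 := congrArg (fun y => cs.simple i' * y * cs.simple i') h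
              rw [conj_cancel] at h2
              rw [h2]
            · intro h
              rw [h]
              calc cs.simple i' * (cs.simple i' * cs.simple i * cs.simple i') * cs.simple i'
                  = cs.simple i' * (cs.simple i' * (cs.simple i * cs.simple i')) * cs.simple i'
                    := by group
                _ = cs.simple i * cs.simple i' * cs.simple i' := by
                    rw [cs.simple_mul_simple_cancel_left]
                _ = cs.simple i := by rw [cs.simple_mul_simple_cancel_right]
          rw [e0, e1, add_assoc]
      rw [hq, ih]
      apply RXext
      · simp only [pow_succ, mul_inv_rev, mul_assoc]
      · simp only
        have hconj : ∀ k : ℕ,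
            ((cs.simple i * cs.simple i') * t.1 * (cs.simple i * cs.simple i')⁻¹
              = Rk cs i i' k) ↔ (t.1 = Rk cs i i' (k + 2)) := by
          intro k
          rw [← Rk_conj cs i i' k]
          constructor
          · intro h; rw [← h]; group
          · intro h
            have h2 := congrArg (fun y => (cs.simple i * cs.simple i') * y *
              (cs.simple i * cs.simple i')⁻¹) h
            rw [show (cs.simple i * cs.simple i') * t.1 * (cs.simple i * cs.simple i')⁻¹
                = (cs.simple i * cs.simple i') * t.1 * (cs.simple i * cs.simple i')⁻¹ from rfl]
            rw [h2]
            group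
        have hsum : SZ cs i i'
            ((cs.simple i * cs.simple i') * t.1 * (cs.simple i * cs.simple i')⁻¹) (2 * n)
            = ∑ k ∈ Finset.range (2 * n),
                (if t.1 = Rk cs i i' (k + 2) then (1:ZMod 2) else 0) := by
          unfold SZ
          exact Finset.sum_congr rfl fun k _ => by rw [hconj k]
        rw [hsum]
        have hrw : SZ cs i i' t.1 (2 * (n + 1)) =
            (∑ k ∈ Finset.range (2 * n),
                (if t.1 = Rk cs i i' (k + 2) then (1:ZMod 2) else 0))
            + ((if t.1 = Rk cs i i' 0 then (1:ZMod 2) else 0)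
              + (if t.1 = Rk cs i i' 1 then (1:ZMod 2) else 0)) := by
          unfold SZ
          rw [show 2 * (n + 1) = 2 * n + 2 from by ring]
          exact sum_shift_two _ _
        rw [hrw]
        ring

lemma pe_liftable : M.IsLiftable (fun i => pe cs i) := by
  intro i i'
  refine Equiv.ext fun p => ?_
  obtain ⟨t, ε⟩ := p
  rw [pe_pow_apply]
  have hper : ∀ k, Rk cs i i' (k + M i i') = Rk cs i i' k := by
    intro k
    unfold Rk
    rw [pow_add, cs.simple_mul_simple_pow' i i', mul_one]
  have hsz : SZ cs i i' t.1 (2 * M i i') = 0 := by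
    unfold SZ
    rw [two_mul, Finset.range_eq_Ico]
    rw [← Finset.sum_Ico_consecutive (fun k => if t.1 = Rk cs i i' k then (1:ZMod 2) else 0)
      (Nat.zero_le (M i i')) (Nat.le_add_right (M i i') (M i i'))]
    rw [Finset.sum_Ico_eq_sum_range, Finset.sum_Ico_eq_sum_range]
    rw [show M i i' - 0 = M i i' from by omega,
        show M i i' + M i i' - M i i' = M i i' from by omega]
    have hc : ∀ k ∈ Finset.range (M i i'),
        (if t.1 = Rk cs i i' (M i i' + k) then (1:ZMod 2) else 0)
          = (if t.1 = Rk cs i i' (0 + k) then (1:ZMod 2) else 0) := by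
      intro k _
      rw [add_comm (M i i') k, hper k, Nat.zero_add]
    rw [Finset.sum_congr rfl hc]
    exact CharTwo.add_self_eq_zero _
  rw [hsz, add_zero, cs.simple_mul_simple_pow i i']
  have h1 : ((1 : Equiv.Perm (RX cs))) (t, ε) = ((t, ε) : RX cs) := rfl
  rw [h1]
  apply RXext
  · simp
  · rfl

/-- the parity representation -/
def prep : W →* Equiv.Perm (RX cs) := cs.lift ⟨fun i => pe cs i, pe_liftable cs⟩

lemma prep_simple (i : B) : prep cs (cs.simple i) = pe cs i :=
  cs.lift_apply_simple (pe_liftable cs) i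

lemma prep_inv_apply (ω : List B) (t : {t : W // cs.IsReflection t}) (ε : ZMod 2) :
    (prep cs (cs.wordProd ω))⁻¹ (t, ε) =
      (⟨(cs.wordProd ω)⁻¹ * t.1 * ((cs.wordProd ω)⁻¹)⁻¹, t.2.conj _⟩,
       ε + cntZ ((cs.wordProd ω)⁻¹ * t.1 * (cs.wordProd ω)) (cs.rightInvSeq ω)) := by
  induction ω generalizing t ε with
  | nil =>
      simp only [cs.wordProd_nil, map_one, inv_one]
      have h1 : ((1 : Equiv.Perm (RX cs))) (t, ε) = ((t, ε) : RX cs) := rfl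
      rw [h1]
      symm
      apply RXext
      · simp
      · rw [cs.rightInvSeq_nil, cntZ_nil, add_zero]
  | cons i ω ih =>
      rw [cs.wordProd_cons, map_mul, mul_inv_rev, prep_simple, pe_inv, Equiv.Perm.mul_apply,
        pe_apply, peFun_apply, ih]
      have hris : cs.rightInvSeq (i :: ω) =
          ((cs.wordProd ω)⁻¹ * cs.simple i * cs.wordProd ω) :: cs.rightInvSeq ω := rfl
      rw [hris, cntZ_cons]
      have hindEq : (cs.simple i * cs.wordProd ω)⁻¹ * t.1 * (cs.simple i * cs.wordProd ω)
          = (cs.wordProd ω)⁻¹ * (cs.simple i * t.1 * cs.simple i) * cs.wordProd ω := by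
        rw [mul_inv_rev, cs.inv_simple]; group
      have hiff : ((cs.wordProd ω)⁻¹ * cs.simple i * cs.wordProd ω =
          (cs.simple i * cs.wordProd ω)⁻¹ * t.1 * (cs.simple i * cs.wordProd ω)) ↔
          (t.1 = cs.simple i) := by
        rw [hindEq, mul_conj_cancel_iff]
        constructor
        · intro h
          exact (conj_eq_simple_iff cs i t.1).mp h.symm
        · intro h
          exact ((conj_eq_simple_iff cs i t.1).mpr h).symm
      have hiff2 : ((cs.wordProd ω)⁻¹ * cs.simple i * cs.wordProd ω =
          (cs.wordProd ω)⁻¹ * (cs.simple i * t.1 * cs.simple i) * cs.wordProd ω) ↔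
          (t.1 = cs.simple i) := by
        rw [mul_conj_cancel_iff]
        constructor
        · intro h
          exact (conj_eq_simple_iff cs i t.1).mp h.symm
        · intro h
          exact ((conj_eq_simple_iff cs i t.1).mpr h).symm
      apply RXext
      · simp only
        rw [mul_inv_rev, cs.inv_simple, mul_inv_rev, cs.inv_simple]
        group
      · simp only
        rw [hindEq]
        by_cases h : t.1 = cs.simple i
        · rw [if_pos h, if_pos (hiff2.mpr h)]
          ring
        · rw [if_neg h, if_neg (fun hh => h (hiff2.mp hh))]
          ring

lemma cntZ_ris_invariant {ω₁ ω₂ : List B} (h : cs.wordProd ω₁ = cs.wordProd ω₂)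
    {t : W} (ht : cs.IsReflection t) :
    cntZ t (cs.rightInvSeq ω₁) = cntZ t (cs.rightInvSeq ω₂) := by
  have h1 := prep_inv_apply cs ω₁
    ⟨cs.wordProd ω₁ * t * (cs.wordProd ω₁)⁻¹, ht.conj _⟩ 0
  have h2 := prep_inv_apply cs ω₂
    ⟨cs.wordProd ω₁ * t * (cs.wordProd ω₁)⁻¹, ht.conj _⟩ 0
  rw [← h] at h2
  rw [h1] at h2
  have h3 := congrArg Prod.snd h2
  simp only [zero_add] at h3
  have he : (cs.wordProd ω₁)⁻¹ *
      ((⟨cs.wordProd ω₁ * t * (cs.wordProd ω₁)⁻¹, ht.conj _⟩ : {x : W // cs.IsReflection x}) : W)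
      * cs.wordProd ω₁ = t := by
    show (cs.wordProd ω₁)⁻¹ * (cs.wordProd ω₁ * t * (cs.wordProd ω₁)⁻¹) * cs.wordProd ω₁ = t
    group
  rw [he] at h3
  exact h3

/-- Strong exchange, right version -/
lemma strong_exchange {η : List B} (hred : cs.IsReduced η) {t : W} (ht : cs.IsReflection t)
    (hlt : cs.length (cs.wordProd η * t) < cs.length (cs.wordProd η)) :
    ∃ p < η.length, cs.wordProd η * t = cs.wordProd (η.eraseIdx p) := by
  obtain ⟨w0, c, htw⟩ := ht
  have ht' : cs.IsReflection t := ⟨w0, c, htw⟩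
  obtain ⟨β, hβred, hβ⟩ := cs.exists_reduced_word' w0
  set γ : List B := β ++ ([c] ++ β.reverse) with hγ
  have hπγ : cs.wordProd γ = t := by
    rw [hγ, cs.wordProd_append, cs.wordProd_append, cs.wordProd_reverse, htw, ← hβ]
    simp [cs.wordProd_cons, cs.wordProd_nil, mul_assoc]
  obtain ⟨α, hαred, hα⟩ := cs.exists_reduced_word' (cs.wordProd η * t)
  have htt : t * t = 1 := ht'.mul_self
  have hπ : cs.wordProd (α ++ γ) = cs.wordProd η := by
    rw [cs.wordProd_append, hπγ, ← hα, mul_assoc, htt, mul_one]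
  have hmain : cntZ t (cs.rightInvSeq η) = 1 := by
    rw [cntZ_ris_invariant cs hπ.symm ht']
    rw [ris_append, cntZ_append]
    have hα0 : cntZ t ((cs.rightInvSeq α).map
        (fun r => (cs.wordProd γ)⁻¹ * r * cs.wordProd γ)) = 0 := by
      rw [show (fun r => (cs.wordProd γ)⁻¹ * r * cs.wordProd γ)
          = (fun r => (cs.wordProd γ)⁻¹ * r * ((cs.wordProd γ)⁻¹)⁻¹) from by
        funext r; rw [inv_inv]]
      rw [cntZ_map_conj]
      rw [show ((cs.wordProd γ)⁻¹)⁻¹ * t * (cs.wordProd γ)⁻¹ = t from by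
        rw [hπγ, inv_inv]
        calc t * t * t⁻¹ = t * (t * t⁻¹) := by group
          _ = t := by group]
      apply cntZ_eq_zero_of_not_mem
      intro hmem
      have hinv := cs.isRightInversion_of_mem_rightInvSeq hαred hmem
      have h2 : cs.length (cs.wordProd α * t) < cs.length (cs.wordProd α) := hinv.2
      rw [← hα, mul_assoc, htt, mul_one] at h2
      omega
    rw [hα0, zero_add]
    have hrisγ : cs.rightInvSeq γ =
        ((cs.rightInvSeq β).map (fun r => (cs.wordProd ([c] ++ β.reverse))⁻¹ * r *
          cs.wordProd ([c] ++ β.reverse))) ++ cs.rightInvSeq ([c] ++ β.reverse) := by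
      rw [hγ, ris_append]
    rw [hrisγ, cntZ_append]
    have hp2 : cs.wordProd ([c] ++ β.reverse) = cs.simple c * (cs.wordProd β)⁻¹ := by
      rw [cs.wordProd_append, cs.wordProd_reverse]
      simp [cs.wordProd_cons, cs.wordProd_nil]
    have hfirst : cntZ t ((cs.rightInvSeq β).map
        (fun r => (cs.wordProd ([c] ++ β.reverse))⁻¹ * r * cs.wordProd ([c] ++ β.reverse)))
        = cntZ (cs.simple c) (cs.rightInvSeq β) := by
      rw [show (fun r => (cs.wordProd ([c] ++ β.reverse))⁻¹ * r * cs.wordProd ([c] ++ β.reverse))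
          = (fun r => (cs.wordProd ([c] ++ β.reverse))⁻¹ * r *
              ((cs.wordProd ([c] ++ β.reverse))⁻¹)⁻¹) from by
        funext r; rw [inv_inv]]
      rw [cntZ_map_conj]
      congr 1
      rw [inv_inv, hp2, htw, hβ]
      calc (cs.simple c * (cs.wordProd β)⁻¹) * (cs.wordProd β * cs.simple c * (cs.wordProd β)⁻¹)
            * (cs.simple c * (cs.wordProd β)⁻¹)⁻¹
          = cs.simple c * ((cs.wordProd β)⁻¹ * cs.wordProd β) * cs.simple c *
              ((cs.wordProd β)⁻¹ * cs.wordProd β) * (cs.simple c)⁻¹ := by group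
        _ = cs.simple c := by
            rw [inv_mul_cancel, mul_one, mul_one, cs.inv_simple,
              cs.simple_mul_simple_cancel_right]
    rw [hfirst]
    have hsecond : cntZ t (cs.rightInvSeq ([c] ++ β.reverse))
        = 1 + cntZ (cs.simple c) (cs.rightInvSeq β) := by
      have hcons : cs.rightInvSeq ([c] ++ β.reverse) =
          ((cs.wordProd β.reverse)⁻¹ * cs.simple c * cs.wordProd β.reverse)
            :: cs.rightInvSeq β.reverse := rfl
      rw [hcons, cntZ_cons]
      have hhead : (cs.wordProd β.reverse)⁻¹ * cs.simple c * cs.wordProd β.reverse = t := by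
        rw [cs.wordProd_reverse, htw, hβ]; group
      rw [if_pos hhead]
      congr 1
      rw [cs.rightInvSeq_reverse, cntZ_reverse, lis_eq_map_conj_ris, cntZ_map_conj]
      congr 1
      rw [htw, hβ]
      group
    rw [hsecond]
    rw [show ∀ x : ZMod 2, x + (1 + x) = 1 from by decide]
  have hmem : t ∈ cs.rightInvSeq η := mem_of_cntZ_eq_one hmain
  obtain ⟨p, hp, hEq⟩ := List.getElem_of_mem hmem
  rw [cs.length_rightInvSeq] at hp
  refine ⟨p, hp, ?_⟩
  have hgd : (cs.rightInvSeq η).getD p 1 = t := by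
    rw [List.getD_eq_getElem?_getD, List.getElem?_eq_getElem (by rwa [cs.length_rightInvSeq])]
    simpa using hEq
  rw [← hgd]
  exact cs.wordProd_mul_getD_rightInvSeq η p


/-! ### deletion property -/

lemma isReduced_nil : cs.IsReduced ([] : List B) := by
  unfold CoxeterSystem.IsReduced
  rw [cs.wordProd_nil, cs.length_one, List.length_nil]

lemma deletion_aux : ∀ (n : ℕ) (ω : List B), ω.length ≤ n →
    ∃ κ, κ.Sublist ω ∧ cs.IsReduced κ ∧ cs.wordProd κ = cs.wordProd ω := by
  intro n
  induction n with
  | zero =>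
      intro ω hω
      have : ω = [] := List.length_eq_zero_iff.mp (by omega)
      subst this
      exact ⟨[], List.Sublist.refl _, isReduced_nil cs, rfl⟩
  | succ n ih =>
      intro ω hω
      by_cases h : cs.IsReduced ω
      · exact ⟨ω, List.Sublist.refl _, h, rfl⟩
      · have hPex : ∃ k, ¬ cs.IsReduced (ω.take k) := ⟨ω.length, by rwa [List.take_length]⟩
        set n0 := Nat.find hPex with hn0
        have hPn0 : ¬ cs.IsReduced (ω.take n0) := Nat.find_spec hPex
        have hn0pos : 0 < n0 := by
          rcases Nat.eq_zero_or_pos n0 with h0 | h0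
          · exfalso; apply hPn0; rw [h0, List.take_zero]; exact isReduced_nil cs
          · exact h0
        have hn0le : n0 ≤ ω.length := by
          have h' : Nat.find hPex ≤ ω.length := Nat.find_le (by rwa [List.take_length])
          rw [← hn0] at h'
          exact h'
        set j := n0 - 1 with hj
        have hjlt : j < ω.length := by omega
        have hredj : cs.IsReduced (ω.take j) := by
          by_contra hc
          have h' : Nat.find hPex ≤ j := Nat.find_le hc
          rw [← hn0] at h'
          omega
        have htakesucc : ω.take (j + 1) = ω.take j ++ [ω[j]] := by
          rw [List.take_succ, List.getElem?_eq_getElem hjlt]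
          rfl
        have hj1 : j + 1 = n0 := by omega
        have hlenj : (ω.take j).length = j := by
          rw [List.length_take]; omega
        have hlj : cs.length (cs.wordProd (ω.take j)) = j := by
          have := hredj; unfold CoxeterSystem.IsReduced at this; omega
        have hnotred : ¬ cs.IsReduced (ω.take (j+1)) := by rw [hj1]; exact hPn0
        have hdesc : cs.length (cs.wordProd (ω.take j) * cs.simple ω[j])
            < cs.length (cs.wordProd (ω.take j)) := by
          rcases cs.length_mul_simple (cs.wordProd (ω.take j)) ω[j] with hup | hdn
          · exfalso
            apply hnotred
            unfold CoxeterSystem.IsReduced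
            rw [htakesucc, cs.wordProd_append, List.length_append]
            simp only [cs.wordProd_cons, cs.wordProd_nil, mul_one, List.length_cons,
              List.length_nil]
            omega
          · omega
        obtain ⟨p, hp, hpe⟩ := strong_exchange cs hredj (cs.isReflection_simple ω[j]) hdesc
        set ω' := (ω.take j).eraseIdx p ++ ω.drop (j+1) with hω'
        have hprod : cs.wordProd ω' = cs.wordProd ω := by
          conv_rhs => rw [← List.take_append_drop (j+1) ω]
          rw [hω', cs.wordProd_append, cs.wordProd_append, ← hpe, htakesucc,
            cs.wordProd_append]
          simp only [cs.wordProd_cons, cs.wordProd_nil, mul_one]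
        have hsub : ω'.Sublist ω := by
          conv_rhs => rw [← List.take_append_drop j ω]
          apply List.Sublist.append
          · exact (List.eraseIdx_sublist _ p)
          · rw [List.drop_eq_getElem_cons hjlt]
            exact List.sublist_cons_self _ _
        have hlen' : ω'.length ≤ n := by
          rw [hω', List.length_append, List.length_eraseIdx]
          have h1 : (ω.take j).length = j := hlenj
          have h2 : (ω.drop (j+1)).length = ω.length - (j+1) := by
            rw [List.length_drop]
          rw [h1, h2]
          split <;> omega
        obtain ⟨κ, hκsub, hκred, hκprod⟩ := ih ω' hlen'
        exact ⟨κ, hκsub.trans hsub, hκred, by rw [hκprod, hprod]⟩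

lemma deletion (ω : List B) :
    ∃ κ, κ.Sublist ω ∧ cs.IsReduced κ ∧ cs.wordProd κ = cs.wordProd ω :=
  deletion_aux cs ω.length ω le_rfl

/-! ### Bruhat chain order -/

def bstep (p q : W) : Prop :=
  ∃ t, cs.IsReflection t ∧ p = q * t ∧ cs.length p < cs.length q

def ble : W → W → Prop := Relation.ReflTransGen (bstep cs)

lemma ble_refl (x : W) : ble cs x x := Relation.ReflTransGen.refl

lemma ble_trans {x y z : W} (h1 : ble cs x y) (h2 : ble cs y z) : ble cs x z :=
  Relation.ReflTransGen.trans h1 h2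

lemma ble_cases {x y : W} (h : ble cs x y) : x = y ∨ cs.length x < cs.length y := by
  induction h with
  | refl => exact Or.inl rfl
  | tail _ hstep ih =>
      obtain ⟨t, _, _, hlt⟩ := hstep
      rcases ih with h | h
      · right; rwa [h]
      · right; omega

lemma ble_length_le {x y : W} (h : ble cs x y) : cs.length x ≤ cs.length y := by
  rcases ble_cases cs h with h | h
  · rw [h]
  · omega

lemma ble_antisymm {x y : W} (h1 : ble cs x y) (h2 : ble cs y x) : x = y := by
  rcases ble_cases cs h1 with h | h
  · exact h
  · have := ble_length_le cs h2; omega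

lemma ble_of_reflection {t y : W} (ht : cs.IsReflection t)
    (h : cs.length (y * t) < cs.length y) : ble cs (y * t) y :=
  Relation.ReflTransGen.single ⟨t, ht, rfl, h⟩

lemma refl_conj {t : W} (ht : cs.IsReflection t) (w : W) :
    cs.IsReflection (w * t * w⁻¹) := ht.conj w

lemma ble_left_down {i : B} {y : W} (h : cs.length (cs.simple i * y) < cs.length y) :
    ble cs (cs.simple i * y) y := by
  refine Relation.ReflTransGen.single ⟨y⁻¹ * cs.simple i * y, ?_, by group, h⟩
  have := (cs.isReflection_simple i).conj y⁻¹
  rwa [inv_inv] at this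

lemma ble_up_left {i : B} {y : W} (h : cs.length y < cs.length (cs.simple i * y)) :
    ble cs y (cs.simple i * y) := by
  refine Relation.ReflTransGen.single ⟨y⁻¹ * cs.simple i * y, ?_, ?_, h⟩
  · have := (cs.isReflection_simple i).conj y⁻¹
    rwa [inv_inv] at this
  · rw [show cs.simple i * y * (y⁻¹ * cs.simple i * y) = cs.simple i * cs.simple i * y from
      by group, cs.simple_mul_simple_self, one_mul]

lemma ble_right_down {i : B} {y : W} (h : cs.length (y * cs.simple i) < cs.length y) :
    ble cs (y * cs.simple i) y :=
  ble_of_reflection cs (cs.isReflection_simple i) h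

lemma ble_up_right {i : B} {y : W} (h : cs.length y < cs.length (y * cs.simple i)) :
    ble cs y (y * cs.simple i) := by
  refine Relation.ReflTransGen.single ⟨cs.simple i, cs.isReflection_simple i, ?_, h⟩
  rw [mul_assoc, cs.simple_mul_simple_self, mul_one]

lemma ble_inv {x y : W} (h : ble cs x y) : ble cs x⁻¹ y⁻¹ := by
  induction h with
  | refl => exact ble_refl cs _
  | tail _ hstep ih =>
      rename_i b c _
      obtain ⟨t, ht, hbc, hlt⟩ := hstep
      refine ble_trans cs ih (Relation.ReflTransGen.single ⟨c * t * c⁻¹, ht.conj c, ?_, ?_⟩)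
      · rw [hbc, mul_inv_rev, ht.inv]; group
      · rw [cs.length_inv, cs.length_inv]; exact hlt

/-- reduced word beginning with a given left descent -/
lemma exists_reduced_word_cons {v : W} {i : B}
    (h : cs.length (cs.simple i * v) < cs.length v) :
    ∃ α, cs.IsReduced (i :: α) ∧ cs.wordProd (i :: α) = v ∧
      cs.wordProd α = cs.simple i * v := by
  obtain ⟨α, hαred, hα⟩ := cs.exists_reduced_word' (cs.simple i * v)
  have hlsv : cs.length (cs.simple i * v) + 1 = cs.length v := by
    rcases cs.length_simple_mul v i with hup | hdn
    · omega
    · omega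
  have hπ : cs.wordProd (i :: α) = v := by
    rw [cs.wordProd_cons, ← hα, cs.simple_mul_simple_cancel_left]
  refine ⟨α, ?_, hπ, hα.symm⟩
  unfold CoxeterSystem.IsReduced
  rw [hπ, List.length_cons]
  have : α.length = cs.length (cs.simple i * v) := by
    unfold CoxeterSystem.IsReduced at hαred
    rw [← hα] at hαred
    omega
  omega

/-- lifting lemma A : if `s v < v`, `u ≤ v`, `u < s u` then `u ≤ s v`. -/
lemma lemA : ∀ (n : ℕ) (v : W), cs.length v ≤ n → ∀ (u : W) (i : B),
    cs.length (cs.simple i * v) < cs.length v → ble cs u v →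
    cs.length u < cs.length (cs.simple i * u) → ble cs u (cs.simple i * v) := by
  intro n
  induction n with
  | zero =>
      intro v hv u i hdesc _ _
      omega
  | succ n ih =>
      intro v hv u i hdesc hle hasc
      rcases Relation.ReflTransGen.cases_tail hle with heq | ⟨v₁, hle1, hstep⟩
      · subst heq; omega
      · obtain ⟨t, ht, hv₁, hlt⟩ := hstep
        by_cases hc : cs.length (cs.simple i * v₁) < cs.length v₁
        · have hu1 : ble cs u (cs.simple i * v₁) :=
            ih v₁ (by omega) u i hc hle1 hasc
          refine ble_trans cs hu1 (Relation.ReflTransGen.single ⟨t, ht, ?_, ?_⟩)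
          · rw [hv₁]; group
          · have h1 : cs.length (cs.simple i * v₁) + 1 = cs.length v₁ := by
              rcases cs.length_simple_mul v₁ i with h | h
              · omega
              · omega
            have h2 : cs.length (cs.simple i * v) + 1 = cs.length v := by
              rcases cs.length_simple_mul v i with h | h
              · omega
              · omega
            omega
        · -- exchange argument
          obtain ⟨α, hηred, hηπ, hαπ⟩ := exists_reduced_word_cons cs hdesc
          obtain ⟨p, hp, hpe⟩ := strong_exchange cs hηred ht (by rw [hηπ, ← hv₁]; exact hlt)
          rw [hηπ] at hpe
          match p, hp with
          | 0, _ =>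
              rw [List.eraseIdx_cons_zero, hαπ, ← hv₁] at hpe
              rw [← hpe]
              exact hle1
          | (q+1), hp =>
              rw [List.eraseIdx_cons_succ, cs.wordProd_cons] at hpe
              set y := cs.wordProd (α.eraseIdx q) with hy
              have hv₁y : v₁ = cs.simple i * y := by rw [← hpe, hv₁]
              have hyv : y = cs.simple i * v₁ := by
                rw [hv₁y, cs.simple_mul_simple_cancel_left]
              have hylen : cs.length v₁ < cs.length y := by
                rw [hyv]
                rcases cs.length_simple_mul v₁ i with h | h
                · omega
                · omega
              have hylen2 : cs.length y < cs.length (cs.simple i * v) := by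
                have hq : q < α.length := by
                  rw [List.length_cons] at hp
                  omega
                have h1 : cs.length y ≤ (α.eraseIdx q).length := cs.length_wordProd_le _
                have h2 : (α.eraseIdx q).length ≤ α.length - 1 := by
                  rw [List.length_eraseIdx]
                  split <;> omega
                have h3 : α.length = cs.length (cs.simple i * v) := by
                  unfold CoxeterSystem.IsReduced at hηred
                  rw [hηπ, List.length_cons] at hηred
                  have h4 : cs.length (cs.simple i * v) + 1 = cs.length v := by
                    rcases cs.length_simple_mul v i with h | h
                    · omega
                    · omega
                  omega
                have h5 : q < α.length := by
                  rw [List.length_cons] at hp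
                  omega
                omega
              -- u ≤ v₁ ≤ y ≤ s_i v
              have hb1 : ble cs v₁ y := by
                rw [hv₁y]
                exact ble_left_down cs (by rw [← hv₁y]; omega)
              have hb2 : ble cs y (cs.simple i * v) := by
                refine Relation.ReflTransGen.single ⟨t, ht, ?_, hylen2⟩
                rw [hyv, hv₁]
                group
              exact ble_trans cs (ble_trans cs hle1 hb1) hb2

/-- lifting lemma C : if `v < s v`, `u ≤ v`, `u < s u` then `s u ≤ s v`. -/
lemma lemC : ∀ (n : ℕ) (v : W), cs.length v ≤ n → ∀ (u : W) (i : B),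
    cs.length v < cs.length (cs.simple i * v) → ble cs u v →
    cs.length u < cs.length (cs.simple i * u) →
    ble cs (cs.simple i * u) (cs.simple i * v) := by
  intro n
  induction n with
  | zero =>
      intro v hv u i hasc hle huasc
      rcases ble_cases cs hle with heq | hlt
      · subst heq; exact ble_refl cs _
      · omega
  | succ n ih =>
      intro v hv u i hasc hle huasc
      rcases Relation.ReflTransGen.cases_tail hle with heq | ⟨v₁, hle1, hstep⟩
      · subst heq; exact ble_refl cs _
      · obtain ⟨t, ht, hv₁, hlt⟩ := hstep
        by_cases hc : cs.length v₁ < cs.length (cs.simple i * v₁)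
        · have h1 : ble cs (cs.simple i * u) (cs.simple i * v₁) :=
            ih v₁ (by omega) u i hc hle1 huasc
          refine ble_trans cs h1 (Relation.ReflTransGen.single ⟨t, ht, ?_, ?_⟩)
          · rw [hv₁]; group
          · have h2 : cs.length (cs.simple i * v₁) ≤ cs.length v₁ + 1 := by
              rcases cs.length_simple_mul v₁ i with h | h
              · omega
              · omega
            have h3 : cs.length (cs.simple i * v) = cs.length v + 1 := by
              rcases cs.length_simple_mul v i with h | h
              · omega
              · omega
            omega
        · push_neg at hc
          have hc' : cs.length (cs.simple i * v₁) < cs.length v₁ := by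
            have := cs.length_simple_mul_ne v₁ i
            omega
          have hz : ble cs u (cs.simple i * v₁) :=
            lemA cs n v₁ (by omega) u i hc' hle1 huasc
          have hzlen : cs.length (cs.simple i * v₁) ≤ n := by
            omega
          have hzasc : cs.length (cs.simple i * v₁)
              < cs.length (cs.simple i * (cs.simple i * v₁)) := by
            rw [cs.simple_mul_simple_cancel_left]
            omega
          have h4 : ble cs (cs.simple i * u) (cs.simple i * (cs.simple i * v₁)) :=
            ih (cs.simple i * v₁) hzlen u i hzasc hz huasc
          rw [cs.simple_mul_simple_cancel_left] at h4
          have h5 : ble cs v₁ v := Relation.ReflTransGen.single ⟨t, ht, hv₁, hlt⟩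
          have h6 : ble cs v (cs.simple i * v) := ble_up_left cs hasc
          exact ble_trans cs h4 (ble_trans cs h5 h6)

/-- Z-lemma : if `s v < v` and `u ≤ v` then `s u ≤ v`. -/
lemma lemZ {v u : W} {i : B} (hdesc : cs.length (cs.simple i * v) < cs.length v)
    (hle : ble cs u v) : ble cs (cs.simple i * u) v := by
  by_cases hu : cs.length (cs.simple i * u) < cs.length u
  · exact ble_trans cs (ble_left_down cs hu) hle
  · have hu' : cs.length u < cs.length (cs.simple i * u) := by
      have := cs.length_simple_mul_ne u i
      omega
    have h1 : ble cs u (cs.simple i * v) := lemA cs (cs.length v) v le_rfl u i hdesc hle hu'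
    have h2 : cs.length (cs.simple i * v) < cs.length (cs.simple i * (cs.simple i * v)) := by
      rw [cs.simple_mul_simple_cancel_left]; omega
    have h3 := lemC cs (cs.length (cs.simple i * v)) (cs.simple i * v) le_rfl u i h2 h1 hu'
    rwa [cs.simple_mul_simple_cancel_left] at h3

/-- right-handed versions -/
lemma lemA_r {v u : W} {i : B} (hdesc : cs.length (v * cs.simple i) < cs.length v)
    (hle : ble cs u v) (hasc : cs.length u < cs.length (u * cs.simple i)) :
    ble cs u (v * cs.simple i) := by
  have h1 : cs.length (cs.simple i * v⁻¹) < cs.length v⁻¹ := by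
    rw [cs.length_inv]
    rw [show cs.simple i * v⁻¹ = (v * cs.simple i)⁻¹ from by rw [mul_inv_rev, cs.inv_simple],
      cs.length_inv]
    exact hdesc
  have h2 : cs.length u⁻¹ < cs.length (cs.simple i * u⁻¹) := by
    rw [cs.length_inv,
      show cs.simple i * u⁻¹ = (u * cs.simple i)⁻¹ from by rw [mul_inv_rev, cs.inv_simple],
      cs.length_inv]
    exact hasc
  have h3 := lemA cs (cs.length v⁻¹) v⁻¹ le_rfl u⁻¹ i h1 (ble_inv cs hle) h2
  have h4 := ble_inv cs h3
  rwa [inv_inv, show (cs.simple i * v⁻¹)⁻¹ = v * cs.simple i from by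
    rw [mul_inv_rev, cs.inv_simple, inv_inv]] at h4

lemma lemC_r {v u : W} {i : B} (hasc : cs.length v < cs.length (v * cs.simple i))
    (hle : ble cs u v) (huasc : cs.length u < cs.length (u * cs.simple i)) :
    ble cs (u * cs.simple i) (v * cs.simple i) := by
  have h1 : cs.length v⁻¹ < cs.length (cs.simple i * v⁻¹) := by
    rw [cs.length_inv,
      show cs.simple i * v⁻¹ = (v * cs.simple i)⁻¹ from by rw [mul_inv_rev, cs.inv_simple],
      cs.length_inv]
    exact hasc
  have h2 : cs.length u⁻¹ < cs.length (cs.simple i * u⁻¹) := by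
    rw [cs.length_inv,
      show cs.simple i * u⁻¹ = (u * cs.simple i)⁻¹ from by rw [mul_inv_rev, cs.inv_simple],
      cs.length_inv]
    exact huasc
  have h3 := lemC cs (cs.length v⁻¹) v⁻¹ le_rfl u⁻¹ i h1 (ble_inv cs hle) h2
  have h4 := ble_inv cs h3
  rwa [show (cs.simple i * u⁻¹)⁻¹ = u * cs.simple i from by
      rw [mul_inv_rev, cs.inv_simple, inv_inv],
    show (cs.simple i * v⁻¹)⁻¹ = v * cs.simple i from by
      rw [mul_inv_rev, cs.inv_simple, inv_inv]] at h4

lemma lemZ_r {v u : W} {i : B} (hdesc : cs.length (v * cs.simple i) < cs.length v)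
    (hle : ble cs u v) : ble cs (u * cs.simple i) v := by
  have h1 : cs.length (cs.simple i * v⁻¹) < cs.length v⁻¹ := by
    rw [cs.length_inv,
      show cs.simple i * v⁻¹ = (v * cs.simple i)⁻¹ from by rw [mul_inv_rev, cs.inv_simple],
      cs.length_inv]
    exact hdesc
  have h3 := lemZ cs h1 (ble_inv cs hle)
  have h4 := ble_inv cs h3
  rwa [show (cs.simple i * u⁻¹)⁻¹ = u * cs.simple i from by
    rw [mul_inv_rev, cs.inv_simple, inv_inv], inv_inv] at h4

/-! ### L1 lifting lemmas (pure Coxeter) -/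

lemma L1desc {w : W} {i j : B} (h1 : cs.length (cs.simple i * w) < cs.length w)
    (h2 : cs.length (w * cs.simple j) < cs.length w)
    (h3 : cs.length (cs.simple i * w * cs.simple j) = cs.length w) :
    cs.simple i * w = w * cs.simple j := by
  obtain ⟨α, hηred, hηπ, hαπ⟩ := exists_reduced_word_cons cs h1
  obtain ⟨p, hp, hpe⟩ := strong_exchange cs hηred (cs.isReflection_simple j)
    (by rw [hηπ]; exact h2)
  rw [hηπ] at hpe
  match p, hp with
  | 0, _ =>
      rw [List.eraseIdx_cons_zero, hαπ] at hpe
      exact hpe.symm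
  | (q+1), hp =>
      exfalso
      rw [List.eraseIdx_cons_succ, cs.wordProd_cons] at hpe
      have hq : q < α.length := by
        rw [List.length_cons] at hp
        omega
      have hkey : cs.simple i * w * cs.simple j = cs.wordProd (α.eraseIdx q) := by
        rw [mul_assoc, hpe, cs.simple_mul_simple_cancel_left]
      have hb1 : cs.length (cs.wordProd (α.eraseIdx q)) ≤ (α.eraseIdx q).length :=
        cs.length_wordProd_le _
      have hb2 : (α.eraseIdx q).length ≤ α.length - 1 := by
        rw [List.length_eraseIdx]; split <;> omega
      have hb3 : α.length + 1 = cs.length w := by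
        unfold CoxeterSystem.IsReduced at hηred
        rw [hηπ, List.length_cons] at hηred
        omega
      rw [← hkey] at hb1
      omega

lemma L1asc {w : W} {i j : B} (h1 : cs.length w < cs.length (cs.simple i * w))
    (h2 : cs.length w < cs.length (w * cs.simple j))
    (h3 : cs.length (cs.simple i * w * cs.simple j) = cs.length w) :
    cs.simple i * w = w * cs.simple j := by
  have e1 : cs.length (cs.simple i * w) = cs.length w + 1 := by
    rcases cs.length_simple_mul w i with h | h
    · omega
    · omega
  have e2 : cs.length (w * cs.simple j) = cs.length w + 1 := by
    rcases cs.length_mul_simple w j with h | h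
    · omega
    · omega
  have d1 : cs.length (cs.simple i * (cs.simple i * w)) < cs.length (cs.simple i * w) := by
    rw [cs.simple_mul_simple_cancel_left]; omega
  have d2 : cs.length ((cs.simple i * w) * cs.simple j) < cs.length (cs.simple i * w) := by
    omega
  have d3 : cs.length (cs.simple i * (cs.simple i * w) * cs.simple j)
      = cs.length (cs.simple i * w) := by
    rw [show cs.simple i * (cs.simple i * w) * cs.simple j = w * cs.simple j from by
      rw [cs.simple_mul_simple_cancel_left]]
    omega
  have := L1desc cs d1 d2 d3
  have h4 : w * cs.simple j = cs.simple i * w * cs.simple j * cs.simple j := by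
    rw [← this, cs.simple_mul_simple_cancel_left]
  rw [h4, cs.simple_mul_simple_cancel_right]


/-! ### subword / chain transfers -/

lemma sublist_concat_cases {κ η : List B} {c : B} (h : κ.Sublist (η ++ [c])) :
    κ.Sublist η ∨ ∃ κ', κ = κ' ++ [c] ∧ κ'.Sublist η := by
  rcases List.sublist_append_iff.mp h with ⟨a, b, rfl, ha, hb⟩
  cases hb with
  | cons _ h' =>
      left
      rw [List.sublist_nil.mp h']
      simpa using ha
  | cons_cons _ h' =>
      right
      exact ⟨a, by rw [List.sublist_nil.mp h'], ha⟩

lemma wordProd_concat' (η : List B) (c : B) :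
    cs.wordProd (η ++ [c]) = cs.wordProd η * cs.simple c := by
  rw [cs.wordProd_append, cs.wordProd_cons, cs.wordProd_nil, mul_one]

lemma isReduced_prefix {η : List B} {c : B} (h : cs.IsReduced (η ++ [c])) :
    cs.IsReduced η := by
  have := h.take η.length
  rwa [List.take_left] at this

lemma subToChain : ∀ {η κ : List B}, cs.IsReduced η → κ.Sublist η →
    ble cs (cs.wordProd κ) (cs.wordProd η) := by
  intro η
  induction η using List.reverseRecOn with
  | nil =>
      intro κ _ hκ
      rw [List.sublist_nil.mp hκ]
      exact ble_refl cs _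
  | append_singleton η' c ih =>
      intro κ hred hκ
      have hred' : cs.IsReduced η' := isReduced_prefix cs hred
      have hπ : cs.wordProd (η' ++ [c]) = cs.wordProd η' * cs.simple c :=
        wordProd_concat' cs η' c
      have hup : cs.length (cs.wordProd η') < cs.length (cs.wordProd η' * cs.simple c) := by
        have e1 : cs.length (cs.wordProd (η' ++ [c])) = η'.length + 1 := by
          have := hred
          unfold CoxeterSystem.IsReduced at this
          rw [this, List.length_append, List.length_cons, List.length_nil]
        have e2 : cs.length (cs.wordProd η') = η'.length := hred'
        rw [← hπ, e1, e2]
        omega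
      have hstepup : ble cs (cs.wordProd η') (cs.wordProd (η' ++ [c])) := by
        rw [hπ]; exact ble_up_right cs hup
      rcases sublist_concat_cases hκ with h | ⟨κ', rfl, hκ'⟩
      · exact ble_trans cs (ih hred' h) hstepup
      · have hπκ : cs.wordProd (κ' ++ [c]) = cs.wordProd κ' * cs.simple c :=
          wordProd_concat' cs κ' c
        have hih := ih hred' hκ'
        by_cases hy : cs.length (cs.wordProd κ' * cs.simple c) < cs.length (cs.wordProd κ')
        · rw [hπκ]
          exact ble_trans cs (ble_right_down cs hy) (ble_trans cs hih hstepup)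
        · have hy' : cs.length (cs.wordProd κ') <
              cs.length (cs.wordProd κ' * cs.simple c) := by
            have := cs.length_mul_simple_ne (cs.wordProd κ') c
            omega
          rw [hπκ, hπ]
          exact lemC_r cs hup hih hy'

lemma chainToSub : ∀ (n : ℕ) (v u : W), cs.length v ≤ n → ble cs u v →
    ∀ η, cs.IsReduced η → cs.wordProd η = v →
    ∃ κ, κ.Sublist η ∧ cs.IsReduced κ ∧ cs.wordProd κ = u := by
  intro n
  induction n with
  | zero =>
      intro v u hv hle η hred hπ
      rcases Relation.ReflTransGen.cases_tail hle with heq | ⟨v₁, _, hstep⟩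
      · subst heq; exact ⟨η, List.Sublist.refl _, hred, hπ⟩
      · obtain ⟨t, _, _, hlt⟩ := hstep
        omega
  | succ n ih =>
      intro v u hv hle η hred hπ
      rcases Relation.ReflTransGen.cases_tail hle with heq | ⟨v₁, hle1, hstep⟩
      · subst heq; exact ⟨η, List.Sublist.refl _, hred, hπ⟩
      · obtain ⟨t, ht, hv₁, hlt⟩ := hstep
        obtain ⟨p, hp, hpe⟩ := strong_exchange cs hred ht (by rw [hπ, ← hv₁]; exact hlt)
        rw [hπ, ← hv₁] at hpe
        obtain ⟨ζ, hζsub, hζred, hζπ⟩ := deletion cs (η.eraseIdx p)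
        rw [← hpe] at hζπ
        obtain ⟨κ, hκsub, hκred, hκπ⟩ := ih v₁ u (by omega) hle1 ζ hζred hζπ
        exact ⟨κ, hκsub.trans (hζsub.trans (List.eraseIdx_sublist _ p)), hκred, hκπ⟩

/-! ### Demazure folds -/

def dR (x : W) (j : B) : W :=
  if cs.length x < cs.length (x * cs.simple j) then x * cs.simple j else x

def dL (i : B) (x : W) : W :=
  if cs.length x < cs.length (cs.simple i * x) then cs.simple i * x else x

def Rfold (x : W) (η : List B) : W := η.foldl (dR cs) x

@[simp] lemma Rfold_nil (x : W) : Rfold cs x [] = x := rfl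

lemma Rfold_cons (x : W) (c : B) (η : List B) :
    Rfold cs x (c :: η) = Rfold cs (dR cs x c) η := rfl

lemma Rfold_concat (x : W) (η : List B) (c : B) :
    Rfold cs x (η ++ [c]) = dR cs (Rfold cs x η) c := by
  unfold Rfold
  rw [List.foldl_append]
  rfl

lemma dR_pos {x : W} {j : B} (h : cs.length x < cs.length (x * cs.simple j)) :
    dR cs x j = x * cs.simple j := if_pos h

lemma dR_neg {x : W} {j : B} (h : ¬ cs.length x < cs.length (x * cs.simple j)) :
    dR cs x j = x := if_neg h

lemma dL_pos {x : W} {i : B} (h : cs.length x < cs.length (cs.simple i * x)) :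
    dL cs i x = cs.simple i * x := if_pos h

lemma dL_neg {x : W} {i : B} (h : ¬ cs.length x < cs.length (cs.simple i * x)) :
    dL cs i x = x := if_neg h

lemma dL_dR_comm (i j : B) (x : W) : dL cs i (dR cs x j) = dR cs (dL cs i x) j := by
  by_cases hL : cs.length x < cs.length (cs.simple i * x)
  · have e1 : cs.length (cs.simple i * x) = cs.length x + 1 := by
      rcases cs.length_simple_mul x i with h | h
      · omega
      · omega
    by_cases hR : cs.length x < cs.length (x * cs.simple j)
    · have e2 : cs.length (x * cs.simple j) = cs.length x + 1 := by
        rcases cs.length_mul_simple x j with h | h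
        · omega
        · omega
      have hassoc : cs.simple i * (x * cs.simple j) = cs.simple i * x * cs.simple j :=
        (mul_assoc _ _ _).symm
      rcases cs.length_mul_simple (cs.simple i * x) j with hy | hy
      · -- length x + 2 : both take
        rw [dR_pos cs hR, dL_pos cs hL, dL_pos cs (by rw [hassoc]; omega),
          dR_pos cs (by omega)]
        exact hassoc
      · -- length x : commutation case
        have h3 : cs.length (cs.simple i * x * cs.simple j) = cs.length x := by omega
        have hcomm := L1asc cs hL hR h3
        rw [dR_pos cs hR, dL_pos cs hL, dL_neg cs (by rw [hassoc]; omega),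
          dR_neg cs (by omega)]
        exact hcomm.symm
    · have e2 : cs.length (x * cs.simple j) + 1 = cs.length x := by
        rcases cs.length_mul_simple x j with h | h
        · omega
        · omega
      have hb : cs.length (cs.simple i * x * cs.simple j) ≤ cs.length x := by
        calc cs.length (cs.simple i * x * cs.simple j)
            = cs.length (cs.simple i * (x * cs.simple j)) := by rw [mul_assoc]
          _ ≤ cs.length (x * cs.simple j) + 1 := by
              rcases cs.length_simple_mul (x * cs.simple j) i with h | h
              · omega
              · omega
          _ ≤ cs.length x := by omega
      rw [dR_neg cs hR, dL_pos cs hL, dR_neg cs (by omega)]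
  · have e1 : cs.length (cs.simple i * x) + 1 = cs.length x := by
      rcases cs.length_simple_mul x i with h | h
      · omega
      · omega
    by_cases hR : cs.length x < cs.length (x * cs.simple j)
    · have h5 : cs.length (cs.simple i * (x * cs.simple j)) ≤ cs.length x := by
        calc cs.length (cs.simple i * (x * cs.simple j))
            = cs.length ((cs.simple i * x) * cs.simple j) := by rw [mul_assoc]
          _ ≤ cs.length (cs.simple i * x) + 1 := by
              rcases cs.length_mul_simple (cs.simple i * x) j with h | h
              · omega
              · omega
          _ ≤ cs.length x := by omega
      rw [dR_pos cs hR, dL_neg cs hL, dL_neg cs (by omega), dR_pos cs hR]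
    · rw [dR_neg cs hR, dL_neg cs hL, dR_neg cs hR]

lemma dL_Rfold (i : B) (x : W) (η : List B) :
    dL cs i (Rfold cs x η) = Rfold cs (dL cs i x) η := by
  induction η generalizing x with
  | nil => rfl
  | cons c η ih =>
      rw [Rfold_cons, Rfold_cons, ih, dL_dR_comm]

lemma Rfold_dec (x : W) (η : List B) :
    ∃ κ, κ.Sublist η ∧ Rfold cs x η = x * cs.wordProd κ ∧
      cs.length (Rfold cs x η) = cs.length x + κ.length := by
  induction η generalizing x with
  | nil =>
      exact ⟨[], List.Sublist.refl _, by rw [Rfold_nil, cs.wordProd_nil, mul_one],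
        by rw [Rfold_nil, List.length_nil, add_zero]⟩
  | cons c η ih =>
      obtain ⟨κ', hsub, heq, hlen⟩ := ih (dR cs x c)
      rw [Rfold_cons]
      by_cases hup : cs.length x < cs.length (x * cs.simple c)
      · have e : cs.length (x * cs.simple c) = cs.length x + 1 := by
          rcases cs.length_mul_simple x c with h | h
          · omega
          · omega
        have hd : dR cs x c = x * cs.simple c := dR_pos cs hup
        refine ⟨c :: κ', List.Sublist.cons₂ c hsub, ?_, ?_⟩
        · rw [heq, hd, cs.wordProd_cons]
          group
        · rw [hlen, hd, e, List.length_cons]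
          omega
      · have hd : dR cs x c = x := dR_neg cs hup
        rw [hd] at heq hlen
        rw [hd]
        exact ⟨κ', hsub.trans (List.sublist_cons_self c η), heq, hlen⟩

lemma ble_fold (x : W) : ∀ (η κ : List B), κ.Sublist η →
    ble cs (x * cs.wordProd κ) (Rfold cs x η) := by
  intro η
  induction η using List.reverseRecOn with
  | nil =>
      intro κ hκ
      rw [List.sublist_nil.mp hκ, cs.wordProd_nil, mul_one, Rfold_nil]
      exact ble_refl cs _
  | append_singleton η' c ih =>
      intro κ hκ
      rw [Rfold_concat]
      set u' := Rfold cs x η' with hu'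
      have hu : ble cs u' (dR cs u' c) := by
        rw [dR]
        split
        · exact ble_up_right cs (by assumption)
        · exact ble_refl cs _
      rcases sublist_concat_cases hκ with h | ⟨κ', rfl, hκ'⟩
      · exact ble_trans cs (ih κ h) hu
      · have hπκ : x * cs.wordProd (κ' ++ [c]) = (x * cs.wordProd κ') * cs.simple c := by
          rw [wordProd_concat']
          group
        rw [hπκ]
        set y := x * cs.wordProd κ' with hy
        have hih : ble cs y u' := ih κ' hκ'
        by_cases hyd : cs.length (y * cs.simple c) < cs.length y
        · exact ble_trans cs (ble_right_down cs hyd) (ble_trans cs hih hu)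
        · have hyu : cs.length y < cs.length (y * cs.simple c) := by
            have := cs.length_mul_simple_ne y c
            omega
          rw [dR]
          by_cases hud : cs.length u' < cs.length (u' * cs.simple c)
          · rw [if_pos hud]
            exact lemC_r cs hud hih hyu
          · rw [if_neg hud]
            have hud' : cs.length (u' * cs.simple c) < cs.length u' := by
              have := cs.length_mul_simple_ne u' c
              omega
            exact lemZ_r cs hud' hih

/-- 0-Hecke well-definedness of the right Demazure fold over reduced words -/
lemma Rfold_wd {η₁ η₂ : List B} (h₁ : cs.IsReduced η₁) (h₂ : cs.IsReduced η₂)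
    (heq : cs.wordProd η₁ = cs.wordProd η₂) (x : W) :
    Rfold cs x η₁ = Rfold cs x η₂ := by
  have claim : ∀ ηa ηb, cs.IsReduced ηa → cs.IsReduced ηb →
      cs.wordProd ηa = cs.wordProd ηb → ∀ x : W,
      ble cs (Rfold cs x ηa) (Rfold cs x ηb) := by
    intro ηa ηb hra hrb hab x
    obtain ⟨κ, hκsub, hxπ, hlen⟩ := Rfold_dec cs x ηa
    have hκred : cs.IsReduced κ := by
      unfold CoxeterSystem.IsReduced
      have hb1 : cs.length (cs.wordProd κ) ≤ κ.length := cs.length_wordProd_le κ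
      have hb2 : cs.length (x * cs.wordProd κ) ≤
          cs.length x + cs.length (cs.wordProd κ) := cs.length_mul_le x _
      rw [← hxπ, hlen] at hb2
      omega
    have hchain : ble cs (cs.wordProd κ) (cs.wordProd ηb) := by
      rw [← hab]
      exact subToChain cs hra hκsub
    obtain ⟨κ', hκ'sub, _, hκ'π⟩ := chainToSub cs (cs.length (cs.wordProd ηb))
      (cs.wordProd ηb) (cs.wordProd κ) le_rfl hchain ηb hrb rfl
    have hf := ble_fold cs x ηb κ' hκ'sub
    rw [hκ'π, ← hxπ] at hf
    exact hf
  exact ble_antisymm cs (claim η₁ η₂ h₁ h₂ heq x) (claim η₂ η₁ h₂ h₁ heq.symm x)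


/-! ### twisted involutions -/

@[simp] lemma twProd_nil : twProd cs star [] = 1 := rfl

lemma twProd_cons (i : B) (ω : List B) :
    twProd cs star (i :: ω) = twMul cs star i (twProd cs star ω) := rfl

lemma sstar_mul_self (hst : ∀ v : W, star (star v) = v) (i : B) :
    star (cs.simple i) * star (cs.simple i) = 1 := by
  rw [← map_mul, cs.simple_mul_simple_self, map_one]

lemma twMul_of_comm {i : B} {x : W} (h : cs.simple i * x = x * star (cs.simple i)) :
    twMul cs star i x = cs.simple i * x := if_pos h

lemma twMul_of_ncomm {i : B} {x : W} (h : ¬ cs.simple i * x = x * star (cs.simple i)) :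
    twMul cs star i x = cs.simple i * x * star (cs.simple i) := if_neg h

lemma twMul_twMul (hst : ∀ v : W, star (star v) = v) (i : B) (x : W) :
    twMul cs star i (twMul cs star i x) = x := by
  have hss := sstar_mul_self cs star hst i
  by_cases h : cs.simple i * x = x * star (cs.simple i)
  · have hc : cs.simple i * (cs.simple i * x) = (cs.simple i * x) * star (cs.simple i) := by
      rw [cs.simple_mul_simple_cancel_left, mul_assoc, ← h, ← mul_assoc,
        cs.simple_mul_simple_self, one_mul]
    rw [twMul_of_comm cs star h, twMul_of_comm cs star hc,
      cs.simple_mul_simple_cancel_left]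
  · have hc : ¬ (cs.simple i * (cs.simple i * x * star (cs.simple i)) =
        (cs.simple i * x * star (cs.simple i)) * star (cs.simple i)) := by
      intro hcon
      apply h
      rw [show cs.simple i * (cs.simple i * x * star (cs.simple i)) =
        x * star (cs.simple i) from by
          rw [show cs.simple i * x * star (cs.simple i)
              = cs.simple i * (x * star (cs.simple i)) from by rw [mul_assoc],
            cs.simple_mul_simple_cancel_left]] at hcon
      rw [show cs.simple i * x * star (cs.simple i) * star (cs.simple i)
          = cs.simple i * x from by rw [mul_assoc, hss, mul_one]] at hcon
      exact hcon.symm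
    rw [twMul_of_ncomm cs star h, twMul_of_ncomm cs star hc]
    rw [show cs.simple i * (cs.simple i * x * star (cs.simple i)) =
        x * star (cs.simple i) from by
          rw [show cs.simple i * x * star (cs.simple i)
              = cs.simple i * (x * star (cs.simple i)) from by rw [mul_assoc],
            cs.simple_mul_simple_cancel_left]]
    rw [mul_assoc, hss, mul_one]

variable {star}

/-- the induced permutation of simple indices -/
noncomputable def bmap (hS : ∀ i : B, ∃ j : B, star (cs.simple i) = cs.simple j) :
    B → B := fun i => (hS i).choose

lemma bmap_spec (hS : ∀ i : B, ∃ j : B, star (cs.simple i) = cs.simple j) (i : B) :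
    star (cs.simple i) = cs.simple (bmap cs hS i) := (hS i).choose_spec

lemma star_wordProd (hS : ∀ i : B, ∃ j : B, star (cs.simple i) = cs.simple j) (ω : List B) :
    star (cs.wordProd ω) = cs.wordProd (ω.map (bmap cs hS)) := by
  induction ω with
  | nil => rw [cs.wordProd_nil, map_one, List.map_nil, cs.wordProd_nil]
  | cons i ω ih =>
      rw [cs.wordProd_cons, map_mul, List.map_cons, cs.wordProd_cons, ih, bmap_spec cs hS]

lemma length_star (hst : ∀ v : W, star (star v) = v)
    (hS : ∀ i : B, ∃ j : B, star (cs.simple i) = cs.simple j) (w : W) :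
    cs.length (star w) = cs.length w := by
  have hle : ∀ v : W, cs.length (star v) ≤ cs.length v := by
    intro v
    obtain ⟨ω, hred, hπ⟩ := cs.exists_reduced_word' v
    rw [hπ, star_wordProd cs hS]
    calc cs.length (cs.wordProd (ω.map (bmap cs hS))) ≤ (ω.map (bmap cs hS)).length :=
        cs.length_wordProd_le _
      _ = ω.length := List.length_map _
      _ = cs.length (cs.wordProd ω) := hred.symm
  have h2 := hle (star w)
  rw [hst w] at h2
  exact le_antisymm (hle w) h2

section TwistedFacts

variable (hst : ∀ v : W, star (star v) = v)
variable (hS : ∀ i : B, ∃ j : B, star (cs.simple i) = cs.simple j)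

include hst hS

lemma lenF1 {x : W} (hx : star x = x⁻¹) (i : B) :
    cs.length (x * star (cs.simple i)) = cs.length (cs.simple i * x) := by
  have h1 : star (x * star (cs.simple i)) = x⁻¹ * cs.simple i := by
    rw [map_mul, hx, hst]
  rw [← length_star cs hst hS (x * star (cs.simple i)), h1, ← cs.length_inv, mul_inv_rev,
    inv_inv, cs.inv_simple]

lemma lenF2 {x : W} (hx : star x = x⁻¹) {i : B}
    (hne : cs.simple i * x ≠ x * star (cs.simple i))
    (hup : cs.length x < cs.length (cs.simple i * x)) :
    cs.length (cs.simple i * x * star (cs.simple i)) = cs.length x + 2 := by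
  have hb := bmap_spec cs hS i
  have hss := sstar_mul_self cs star hst i
  have he : cs.length (cs.simple i * x) = cs.length x + 1 := by
    rcases cs.length_simple_mul x i with h | h
    · omega
    · omega
  obtain ⟨y, hy⟩ : ∃ y, y = x * star (cs.simple i) := ⟨_, rfl⟩
  have hassoc : cs.simple i * x * star (cs.simple i) = cs.simple i * y := by
    rw [hy, mul_assoc]
  have hly : cs.length y = cs.length x + 1 := by
    rw [hy, lenF1 cs hst hS hx i]
    omega
  rw [hassoc]
  rcases cs.length_simple_mul y i with h | h
  · omega
  · exfalso
    have hyx : y * star (cs.simple i) = x := by rw [hy, mul_assoc, hss, mul_one]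
    have hyd1 : cs.length (cs.simple i * y) < cs.length y := by omega
    have hyd2 : cs.length (y * cs.simple (bmap cs hS i)) < cs.length y := by
      rw [← hb, hyx]; omega
    have hyd3 : cs.length (cs.simple i * y * cs.simple (bmap cs hS i)) = cs.length y := by
      rw [← hb, mul_assoc, hyx]
      omega
    have hcomm := L1desc cs hyd1 hyd2 hyd3
    apply hne
    have h7 : cs.simple i * y = x := by rw [hcomm, ← hb, hyx]
    rw [hy] at h7
    have h8 := congrArg (fun z => cs.simple i * z) h7
    rw [cs.simple_mul_simple_cancel_left] at h8
    exact h8.symm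

lemma lenF2' {x : W} (hx : star x = x⁻¹) {i : B}
    (hne : cs.simple i * x ≠ x * star (cs.simple i))
    (hdn : cs.length (cs.simple i * x) < cs.length x) :
    cs.length (cs.simple i * x * star (cs.simple i)) + 2 = cs.length x := by
  have hb := bmap_spec cs hS i
  have hss := sstar_mul_self cs star hst i
  have he : cs.length (cs.simple i * x) + 1 = cs.length x := by
    rcases cs.length_simple_mul x i with h | h
    · omega
    · omega
  obtain ⟨z, hz⟩ : ∃ z, z = cs.simple i * x * star (cs.simple i) := ⟨_, rfl⟩
  rw [← hz]
  have hz1 : z * star (cs.simple i) = cs.simple i * x := by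
    rw [hz, mul_assoc, hss, mul_one]
  have hz2 : cs.simple i * z = x * star (cs.simple i) := by
    rw [hz, show cs.simple i * x * star (cs.simple i)
        = cs.simple i * (x * star (cs.simple i)) from by rw [mul_assoc],
      cs.simple_mul_simple_cancel_left]
  have hlz2 : cs.length (cs.simple i * z) = cs.length (cs.simple i * x) := by
    rw [hz2, lenF1 cs hst hS hx i]
  rcases cs.length_simple_mul z i with h | h
  · omega
  · exfalso
    have hlz : cs.length z = cs.length x := by omega
    have hd1 : cs.length (cs.simple i * z) < cs.length z := by omega
    have hd2 : cs.length (z * cs.simple (bmap cs hS i)) < cs.length z := by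
      rw [← hb, hz1]; omega
    have hd3 : cs.length (cs.simple i * z * cs.simple (bmap cs hS i)) = cs.length z := by
      rw [← hb, mul_assoc, hz1, cs.simple_mul_simple_cancel_left]
      omega
    have hcomm := L1desc cs hd1 hd2 hd3
    apply hne
    have h9 : x * star (cs.simple i) = cs.simple i * x := by
      rw [← hz2, hcomm, ← hb, hz1]
    exact h9.symm

end TwistedFacts


/-- the canonical twisted involution attached to `v ∈ W` -/
noncomputable def Phic (hS : ∀ i : B, ∃ j : B, star (cs.simple i) = cs.simple j) (v : W) : W :=
  Rfold cs v (((cs.exists_reduced_word' v).choose).reverse.map (bmap cs hS))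

section Main

variable (hst : ∀ v : W, star (star v) = v)
variable (hS : ∀ i : B, ∃ j : B, star (cs.simple i) = cs.simple j)

include hst hS

lemma rev_map_reduced {η : List B} {v : W} (hred : cs.IsReduced η) (hπ : cs.wordProd η = v) :
    cs.IsReduced (η.reverse.map (bmap cs hS)) ∧
      cs.wordProd (η.reverse.map (bmap cs hS)) = star v⁻¹ := by
  have h2 : cs.wordProd (η.reverse.map (bmap cs hS)) = star v⁻¹ := by
    rw [← star_wordProd cs hS, cs.wordProd_reverse, hπ]
  constructor
  · unfold CoxeterSystem.IsReduced
    rw [h2, length_star cs hst hS, cs.length_inv, List.length_map, List.length_reverse]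
    rw [← hπ]
    exact hred
  · exact h2

lemma Phic_spec {v : W} {η : List B} (hred : cs.IsReduced η) (hπ : cs.wordProd η = v) :
    Phic cs hS v = Rfold cs v (η.reverse.map (bmap cs hS)) := by
  unfold Phic
  obtain ⟨h1, h2⟩ := (cs.exists_reduced_word' v).choose_spec
  have ha := rev_map_reduced cs hst hS h1 h2.symm
  have hb2 := rev_map_reduced cs hst hS hred hπ
  exact Rfold_wd cs ha.1 hb2.1 (by rw [ha.2, hb2.2]) v

lemma Phic_one : Phic cs hS 1 = 1 := by
  rw [Phic_spec cs hst hS (isReduced_nil cs) (cs.wordProd_nil)]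
  rfl

lemma Phic_rec {v : W} {i : B} (hdesc : cs.length (cs.simple i * v) < cs.length v) :
    Phic cs hS v = dR cs (dL cs i (Phic cs hS (cs.simple i * v))) (bmap cs hS i) := by
  obtain ⟨α, hηred, hηπ, hαπ⟩ := exists_reduced_word_cons cs hdesc
  have he : cs.length (cs.simple i * v) + 1 = cs.length v := by
    rcases cs.length_simple_mul v i with h | h
    · omega
    · omega
  have hαred : cs.IsReduced α := by
    unfold CoxeterSystem.IsReduced at hηred ⊢
    rw [hηπ, List.length_cons] at hηred
    rw [hαπ]
    omega
  have h1 : Phic cs hS v = Rfold cs v ((i :: α).reverse.map (bmap cs hS)) :=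
    Phic_spec cs hst hS hηred hηπ
  have h2 : Phic cs hS (cs.simple i * v)
      = Rfold cs (cs.simple i * v) (α.reverse.map (bmap cs hS)) :=
    Phic_spec cs hst hS hαred hαπ
  rw [h1, show ((i :: α).reverse.map (bmap cs hS))
      = (α.reverse.map (bmap cs hS)) ++ [bmap cs hS i] from by simp, Rfold_concat]
  congr 1
  rw [h2, dL_Rfold]
  congr 1
  have hup : cs.length (cs.simple i * v) < cs.length (cs.simple i * (cs.simple i * v)) := by
    rw [cs.simple_mul_simple_cancel_left]; exact hdesc
  rw [dL_pos cs hup, cs.simple_mul_simple_cancel_left]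

lemma dRdL_asc {x : W} {i : B} (hx : star x = x⁻¹)
    (hup : cs.length x < cs.length (cs.simple i * x)) :
    dR cs (dL cs i x) (bmap cs hS i) = twMul cs star i x := by
  have hb := bmap_spec cs hS i
  rw [dL_pos cs hup]
  by_cases h : cs.simple i * x = x * star (cs.simple i)
  · have hcalc : (cs.simple i * x) * cs.simple (bmap cs hS i) = x := by
      rw [← hb, mul_assoc, ← h, ← mul_assoc, cs.simple_mul_simple_self, one_mul]
    rw [twMul_of_comm cs star h]
    apply dR_neg
    rw [hcalc]
    omega
  · have hF2 := lenF2 cs hst hS hx h hup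
    have he : cs.length (cs.simple i * x) = cs.length x + 1 := by
      rcases cs.length_simple_mul x i with hh | hh
      · omega
      · omega
    have heq2 : (cs.simple i * x) * cs.simple (bmap cs hS i)
        = cs.simple i * x * star (cs.simple i) := by rw [← hb]
    rw [twMul_of_ncomm cs star h, dR_pos cs (by rw [heq2, hF2]; omega), heq2]

lemma dRdL_desc {x : W} {i : B} (hx : star x = x⁻¹)
    (hdn : cs.length (cs.simple i * x) < cs.length x) :
    dR cs (dL cs i x) (bmap cs hS i) = x := by
  rw [dL_neg cs (by omega)]
  apply dR_neg
  rw [show x * cs.simple (bmap cs hS i) = x * star (cs.simple i) from by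
    rw [← bmap_spec cs hS i], lenF1 cs hst hS hx i]
  omega

lemma Phic_dec (v : W) : ∃ c : W, Phic cs hS v = v * c ∧
    cs.length (Phic cs hS v) = cs.length v + cs.length c := by
  obtain ⟨κ, _, heq, hlen⟩ :=
    Rfold_dec cs v (((cs.exists_reduced_word' v).choose).reverse.map (bmap cs hS))
  have h0 : Phic cs hS v
      = Rfold cs v (((cs.exists_reduced_word' v).choose).reverse.map (bmap cs hS)) := rfl
  refine ⟨cs.wordProd κ, by rw [h0, heq], ?_⟩
  have hb1 : cs.length (cs.wordProd κ) ≤ κ.length := cs.length_wordProd_le κ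
  have hb2 : cs.length (v * cs.wordProd κ) ≤ cs.length v + cs.length (cs.wordProd κ) :=
    cs.length_mul_le v _
  rw [← heq, ← h0] at hb2
  rw [h0, hlen] at hb2 ⊢
  omega

lemma BD : ∀ (n : ℕ) (v : W), cs.length v ≤ n →
    star (Phic cs hS v) = (Phic cs hS v)⁻¹ ∧
    ∃ ζ : List B, twProd cs star ζ = Phic cs hS v ∧ ζ.length ≤ cs.length v := by
  intro n
  induction n with
  | zero =>
      intro v hv
      have h1 : v = 1 := cs.length_eq_zero_iff.mp (by omega)
      subst h1
      rw [Phic_one cs hst hS]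
      exact ⟨by rw [map_one, inv_one], ⟨[], rfl, by simp⟩⟩
  | succ n ih =>
      intro v hv
      by_cases h1 : v = 1
      · subst h1
        rw [Phic_one cs hst hS]
        exact ⟨by rw [map_one, inv_one], ⟨[], rfl, by simp⟩⟩
      · obtain ⟨i, hdesc⟩ := cs.exists_leftDescent_of_ne_one h1
        have hdesc' : cs.length (cs.simple i * v) < cs.length v := hdesc
        have he : cs.length (cs.simple i * v) + 1 = cs.length v := by
          rcases cs.length_simple_mul v i with h | h
          · omega
          · omega
        obtain ⟨hinv2, ζ₂, hζ₂, hζlen₂⟩ := ih (cs.simple i * v) (by omega)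
        have hrec := Phic_rec cs hst hS hdesc'
        by_cases hc : cs.length (Phic cs hS (cs.simple i * v)) <
            cs.length (cs.simple i * Phic cs hS (cs.simple i * v))
        · rw [dRdL_asc cs hst hS hinv2 hc] at hrec
          constructor
          · rw [hrec]
            exact twMul_mem cs star hst i hinv2
          · refine ⟨i :: ζ₂, by rw [twProd_cons, hζ₂, hrec], ?_⟩
            rw [List.length_cons]
            omega
        · have hc' : cs.length (cs.simple i * Phic cs hS (cs.simple i * v)) <
              cs.length (Phic cs hS (cs.simple i * v)) := by
            have := cs.length_simple_mul_ne (Phic cs hS (cs.simple i * v)) i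
            omega
          rw [dRdL_desc cs hst hS hinv2 hc'] at hrec
          rw [hrec]
          exact ⟨hinv2, ζ₂, hζ₂, by omega⟩

lemma BE : ∀ (n : ℕ) (x : W) (v : W), cs.length v ≤ n →
    star x = x⁻¹ → ble cs x (Phic cs hS v) →
    ∃ ζ : List B, twProd cs star ζ = x ∧ ζ.length ≤ n := by
  intro n
  induction n with
  | zero =>
      intro x v hv hx hle
      have hv1 : v = 1 := cs.length_eq_zero_iff.mp (by omega)
      subst hv1
      rw [Phic_one cs hst hS] at hle
      rcases ble_cases cs hle with heq | hlt
      · exact ⟨[], by rw [twProd_nil, heq], le_rfl⟩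
      · rw [cs.length_one] at hlt; omega
  | succ n ih =>
      intro x v hv hx hle
      have hex : ∃ k, ∃ v' : W, cs.length v' = k ∧ Phic cs hS v' = Phic cs hS v :=
        ⟨_, v, rfl, rfl⟩
      obtain ⟨v₀, hv₀len, hv₀⟩ := Nat.find_spec hex
      have hmin : ∀ v', Phic cs hS v' = Phic cs hS v → Nat.find hex ≤ cs.length v' :=
        fun v' h' => Nat.find_le ⟨v', rfl, h'⟩
      have hv₀v : cs.length v₀ ≤ cs.length v := by
        have := hmin v rfl; omega
      by_cases hxy : x = Phic cs hS v
      · obtain ⟨_, ζ, hζ, hζl⟩ := BD cs hst hS (cs.length v₀) v₀ le_rfl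
        exact ⟨ζ, by rw [hζ, hv₀, ← hxy], by omega⟩
      · have hne1 : v₀ ≠ 1 := by
          intro h0
          rw [h0, Phic_one cs hst hS] at hv₀
          rcases ble_cases cs hle with heq | hlt
          · exact hxy heq
          · rw [← hv₀, cs.length_one] at hlt; omega
        obtain ⟨c, hcdesc⟩ := cs.exists_leftDescent_of_ne_one hne1
        have hcdesc' : cs.length (cs.simple c * v₀) < cs.length v₀ := hcdesc
        have hsn : cs.length (cs.simple c * v₀) ≤ n := by omega
        obtain ⟨y₂, hy₂⟩ : ∃ y₂, y₂ = Phic cs hS (cs.simple c * v₀) := ⟨_, rfl⟩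
        have hinv2 : star y₂ = y₂⁻¹ := by
          rw [hy₂]; exact (BD cs hst hS _ _ le_rfl).1
        have hrec := Phic_rec cs hst hS hcdesc'
        rw [← hy₂] at hrec
        have hcc : cs.length y₂ < cs.length (cs.simple c * y₂) := by
          by_contra hno
          have hc' : cs.length (cs.simple c * y₂) < cs.length y₂ := by
            have := cs.length_simple_mul_ne y₂ c
            omega
          rw [dRdL_desc cs hst hS hinv2 hc'] at hrec
          have h5 := hmin (cs.simple c * v₀) (by rw [← hy₂, ← hrec, hv₀])
          omega
        rw [dRdL_asc cs hst hS hinv2 hcc] at hrec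
        have hyτ : Phic cs hS v = twMul cs star c y₂ := by rw [← hv₀, hrec]
        obtain ⟨Y, hY⟩ : ∃ Y, Y = Phic cs hS v := ⟨_, rfl⟩
        rw [← hY] at hle hxy hyτ
        have hb := bmap_spec cs hS c
        have hss := sstar_mul_self cs star hst c
        -- uniform finisher
        have finish : ∀ x' : W, star x' = x'⁻¹ → ble cs x' y₂ →
            twMul cs star c x' = x → ∃ ζ, twProd cs star ζ = x ∧ ζ.length ≤ n + 1 := by
          intro x' hx' hble hback
          obtain ⟨ζ', hζ', hζl'⟩ := ih x' (cs.simple c * v₀) hsn hx' (by rw [← hy₂]; exact hble)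
          exact ⟨c :: ζ', by rw [twProd_cons, hζ', hback], by rw [List.length_cons]; omega⟩
        have finish0 : ble cs x y₂ → ∃ ζ, twProd cs star ζ = x ∧ ζ.length ≤ n + 1 := by
          intro hble
          obtain ⟨ζ', hζ', hζl'⟩ := ih x (cs.simple c * v₀) hsn hx (by rw [← hy₂]; exact hble)
          exact ⟨ζ', hζ', by omega⟩
        by_cases hcm : cs.simple c * y₂ = y₂ * star (cs.simple c)
        · -- commuting case for Y
          have he2 : cs.length (cs.simple c * y₂) = cs.length y₂ + 1 := by
            rcases cs.length_simple_mul y₂ c with hh | hh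
            · omega
            · omega
          have hYe : Y = cs.simple c * y₂ := by rw [hyτ, twMul_of_comm cs star hcm]
          have hYlen : cs.length Y = cs.length y₂ + 1 := by rw [hYe]; omega
          have hydesc : cs.length (cs.simple c * Y) < cs.length Y := by
            rw [hYe, cs.simple_mul_simple_cancel_left]; omega
          have hscY : cs.simple c * Y = y₂ := by
            rw [hYe, cs.simple_mul_simple_cancel_left]
          by_cases hxc : cs.length x < cs.length (cs.simple c * x)
          · have z2 : ble cs x (cs.simple c * Y) :=
              lemA cs (cs.length Y) Y le_rfl x c hydesc hle hxc
            rw [hscY] at z2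
            exact finish0 z2
          · have hxc' : cs.length (cs.simple c * x) < cs.length x := by
              have := cs.length_simple_mul_ne x c
              omega
            have z1 : ble cs (cs.simple c * x) Y := lemZ cs hydesc hle
            have hax : cs.length (cs.simple c * x)
                < cs.length (cs.simple c * (cs.simple c * x)) := by
              rw [cs.simple_mul_simple_cancel_left]; omega
            have z2 : ble cs (cs.simple c * x) (cs.simple c * Y) :=
              lemA cs (cs.length Y) Y le_rfl _ c hydesc z1 hax
            rw [hscY] at z2
            by_cases hxcm : cs.simple c * x = x * star (cs.simple c)
            · refine finish (twMul cs star c x) (twMul_mem cs star hst c hx) ?_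
                (twMul_twMul cs star hst c x)
              rw [twMul_of_comm cs star hxcm]
              exact z2
            · have hF2' := lenF2' cs hst hS hx hxcm hxc'
              have hxx : (cs.simple c * x) * cs.simple (bmap cs hS c)
                  = cs.simple c * x * star (cs.simple c) := by rw [← hb]
              have hd : cs.length ((cs.simple c * x) * cs.simple (bmap cs hS c))
                  < cs.length (cs.simple c * x) := by
                rw [hxx]
                have hee : cs.length (cs.simple c * x) + 1 = cs.length x := by
                  rcases cs.length_simple_mul x c with h | h
                  · omega
                  · omega
                omega
              have z3 : ble cs (cs.simple c * x * star (cs.simple c)) y₂ := by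
                have := ble_trans cs (ble_right_down cs hd) z2
                rwa [hxx] at this
              refine finish (twMul cs star c x) (twMul_mem cs star hst c hx) ?_
                (twMul_twMul cs star hst c x)
              rw [twMul_of_ncomm cs star hxcm]
              exact z3
        · -- non-commuting case for Y
          have hYe : Y = cs.simple c * y₂ * star (cs.simple c) := by
            rw [hyτ, twMul_of_ncomm cs star hcm]
          have hYlen : cs.length Y = cs.length y₂ + 2 := by
            rw [hYe]; exact lenF2 cs hst hS hinv2 hcm hcc
          have hscY : cs.simple c * Y = y₂ * star (cs.simple c) := by
            rw [hYe, show cs.simple c * y₂ * star (cs.simple c)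
              = cs.simple c * (y₂ * star (cs.simple c)) from by rw [mul_assoc],
              cs.simple_mul_simple_cancel_left]
          have he2 : cs.length (cs.simple c * y₂) = cs.length y₂ + 1 := by
            rcases cs.length_simple_mul y₂ c with hh | hh
            · omega
            · omega
          have hscYlen : cs.length (cs.simple c * Y) = cs.length y₂ + 1 := by
            rw [hscY, lenF1 cs hst hS hinv2 c]
            omega
          have hydesc : cs.length (cs.simple c * Y) < cs.length Y := by omega
          have hscYs : (cs.simple c * Y) * cs.simple (bmap cs hS c) = y₂ := by
            rw [hscY, ← hb, mul_assoc, hss, mul_one]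
          have hrd : cs.length ((cs.simple c * Y) * cs.simple (bmap cs hS c))
              < cs.length (cs.simple c * Y) := by
            rw [hscYs]
            omega
          by_cases hxc : cs.length x < cs.length (cs.simple c * x)
          · have z1 : ble cs x (cs.simple c * Y) :=
              lemA cs (cs.length Y) Y le_rfl x c hydesc hle hxc
            have hxra : cs.length x < cs.length (x * cs.simple (bmap cs hS c)) := by
              rw [← hb, lenF1 cs hst hS hx c]
              omega
            have z2 := lemA_r cs hrd z1 hxra
            rw [hscYs] at z2
            exact finish0 z2
          · have hxc' : cs.length (cs.simple c * x) < cs.length x := by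
              have := cs.length_simple_mul_ne x c
              omega
            have z1 : ble cs (cs.simple c * x) Y := lemZ cs hydesc hle
            have hax : cs.length (cs.simple c * x)
                < cs.length (cs.simple c * (cs.simple c * x)) := by
              rw [cs.simple_mul_simple_cancel_left]; omega
            have z2 : ble cs (cs.simple c * x) (cs.simple c * Y) :=
              lemA cs (cs.length Y) Y le_rfl _ c hydesc z1 hax
            by_cases hxcm : cs.simple c * x = x * star (cs.simple c)
            · have hra : cs.length (cs.simple c * x)
                  < cs.length ((cs.simple c * x) * cs.simple (bmap cs hS c)) := by
                rw [← hb, show (cs.simple c * x) * star (cs.simple c) = x from by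
                  rw [hxcm, mul_assoc, hss, mul_one]]
                omega
              have z3 := lemA_r cs hrd z2 hra
              rw [hscYs] at z3
              refine finish (twMul cs star c x) (twMul_mem cs star hst c hx) ?_
                (twMul_twMul cs star hst c x)
              rw [twMul_of_comm cs star hxcm]
              exact z3
            · have z4 := lemZ_r cs hrd z2
              have hF2' := lenF2' cs hst hS hx hxcm hxc'
              have hee : cs.length (cs.simple c * x) + 1 = cs.length x := by
                rcases cs.length_simple_mul x c with hh | hh
                · omega
                · omega
              have hmm : (cs.simple c * x * star (cs.simple c)) * cs.simple (bmap cs hS c)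
                  = cs.simple c * x := by
                rw [← hb, mul_assoc, mul_assoc, hss, mul_one]
              have hra : cs.length (cs.simple c * x * star (cs.simple c))
                  < cs.length ((cs.simple c * x * star (cs.simple c))
                      * cs.simple (bmap cs hS c)) := by
                rw [hmm]
                omega
              have z4' : ble cs ((cs.simple c * x) * cs.simple (bmap cs hS c))
                  (cs.simple c * Y) := z4
              have hxx : (cs.simple c * x) * cs.simple (bmap cs hS c)
                  = cs.simple c * x * star (cs.simple c) := by rw [← hb]
              rw [hxx] at z4'
              have z5 := lemA_r cs hrd z4' hra
              rw [hscYs] at z5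
              refine finish (twMul cs star c x) (twMul_mem cs star hst c hx) ?_
                (twMul_twMul cs star hst c x)
              rw [twMul_of_ncomm cs star hxcm]
              exact z5

lemma main_lem : ∀ (k : ℕ) (ω : List B), ω.length = k →
    (∀ ω' : List B, twProd cs star ω' = twProd cs star ω → ω.length ≤ ω'.length) →
    cs.IsReduced ω ∧ twProd cs star ω = Phic cs hS (cs.wordProd ω) := by
  intro k
  induction k with
  | zero =>
      intro ω hω _
      have h0 : ω = [] := List.length_eq_zero_iff.mp hω
      subst h0
      exact ⟨isReduced_nil cs, by rw [twProd_nil, cs.wordProd_nil, Phic_one cs hst hS]⟩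
  | succ k ih =>
      intro ω hω hmin
      obtain ⟨i, α, rfl⟩ : ∃ i α, ω = i :: α := by
        cases ω with
        | nil => simp at hω
        | cons i α => exact ⟨i, α, rfl⟩
      have hαlen : α.length = k := by simpa using hω
      have hαmin : ∀ ω', twProd cs star ω' = twProd cs star α → α.length ≤ ω'.length := by
        intro ω' h'
        have h2 : twProd cs star (i :: ω') = twProd cs star (i :: α) := by
          rw [twProd_cons, twProd_cons, h']
        have h3 := hmin (i :: ω') h2
        simpa using h3
      obtain ⟨hαred, hαφ⟩ := ih α hαlen hαmin
      have hwlen : cs.length (cs.wordProd α) = α.length := hαred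
      have hyinv : star (twProd cs star α) = (twProd cs star α)⁻¹ := by
        rw [hαφ]; exact (BD cs hst hS _ _ le_rfl).1
      have hasc : cs.length (twProd cs star α) <
          cs.length (cs.simple i * twProd cs star α) := by
        by_contra hno
        have hdn : cs.length (cs.simple i * twProd cs star α)
            < cs.length (twProd cs star α) := by
          have := cs.length_simple_mul_ne (twProd cs star α) i
          omega
        have hble : ble cs (twMul cs star i (twProd cs star α)) (twProd cs star α) := by
          by_cases hcm : cs.simple i * twProd cs star α
              = twProd cs star α * star (cs.simple i)
          · rw [twMul_of_comm cs star hcm]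
            exact ble_left_down cs hdn
          · rw [twMul_of_ncomm cs star hcm]
            have hF2' := lenF2' cs hst hS hyinv hcm hdn
            have hee : cs.length (cs.simple i * twProd cs star α) + 1
                = cs.length (twProd cs star α) := by
              rcases cs.length_simple_mul (twProd cs star α) i with hh | hh
              · omega
              · omega
            refine ble_trans cs ?_ (ble_left_down cs hdn)
            have hbb := bmap_spec cs hS i
            have h9 : (cs.simple i * twProd cs star α) * cs.simple (bmap cs hS i)
                = cs.simple i * twProd cs star α * star (cs.simple i) := by rw [← hbb]
            have h10 := ble_right_down cs
              (i := bmap cs hS i) (y := cs.simple i * twProd cs star α)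
              (by rw [h9]; omega)
            rwa [h9] at h10
        obtain ⟨ζ, hζ, hζl⟩ := BE cs hst hS (cs.length (cs.wordProd α))
          (twMul cs star i (twProd cs star α)) (cs.wordProd α) le_rfl
          (twMul_mem cs star hst i hyinv) (by rw [← hαφ]; exact hble)
        have h5 := hmin ζ (by rw [hζ, twProd_cons])
        rw [List.length_cons] at h5
        omega
      have hw'up : cs.length (cs.wordProd α) < cs.length (cs.simple i * cs.wordProd α) := by
        by_contra hno
        have hdn : cs.length (cs.simple i * cs.wordProd α) < cs.length (cs.wordProd α) := by
          have := cs.length_simple_mul_ne (cs.wordProd α) i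
          omega
        obtain ⟨cc, hcc1, hcc2⟩ := Phic_dec cs hst hS (cs.wordProd α)
        have h6 : cs.length (cs.simple i * twProd cs star α) ≤
            cs.length (cs.simple i * cs.wordProd α) + cs.length cc := by
          rw [hαφ, hcc1, ← mul_assoc]
          exact cs.length_mul_le _ _
        have h7 : cs.length (twProd cs star α)
            = cs.length (cs.wordProd α) + cs.length cc := by
          rw [hαφ]; exact hcc2
        omega
      have hupeq : cs.length (cs.simple i * cs.wordProd α)
          = cs.length (cs.wordProd α) + 1 := by
        rcases cs.length_simple_mul (cs.wordProd α) i with hh | hh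
        · omega
        · omega
      have hred : cs.IsReduced (i :: α) := by
        unfold CoxeterSystem.IsReduced
        rw [cs.wordProd_cons, List.length_cons]
        omega
      refine ⟨hred, ?_⟩
      have hstep : twProd cs star (i :: α)
          = dR cs (dL cs i (twProd cs star α)) (bmap cs hS i) := by
        rw [twProd_cons, dRdL_asc cs hst hS hyinv hasc]
      rw [hstep, hαφ, cs.wordProd_cons]
      have hd : cs.length (cs.simple i * (cs.simple i * cs.wordProd α))
          < cs.length (cs.simple i * cs.wordProd α) := by
        rw [cs.simple_mul_simple_cancel_left]
        omega
      rw [Phic_rec cs hst hS hd, cs.simple_mul_simple_cancel_left]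

end Main

end DevIUIM

theorem statement13
    {B W : Type*} [Group W] {M : CoxeterMatrix B} (cs : CoxeterSystem M W)
    (star : W ≃* W) (hst : ∀ v : W, star (star v) = v)
    (hS : ∀ i : B, ∃ j : B, star (cs.simple i) = cs.simple j)
    (E : {w : W // star w = w⁻¹} → List B)
    (hE : ∀ z : {w : W // star w = w⁻¹}, IsRedI cs star (E z) z.1) :
    Function.Injective (fun z : {w : W // star w = w⁻¹} => cs.wordProd (E z)) := by
  intro z₁ z₂ h
  simp only at h
  obtain ⟨h1, hmin1⟩ := hE z₁
  obtain ⟨h2, hmin2⟩ := hE z₂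
  have m1 := main_lem cs hst hS (E z₁).length (E z₁) rfl
    (fun ω' hh => hmin1 ω' (by rw [hh, h1]))
  have m2 := main_lem cs hst hS (E z₂).length (E z₂) rfl
    (fun ω' hh => hmin2 ω' (by rw [hh, h2]))
  apply Subtype.ext
  calc z₁.1 = twProd cs star (E z₁) := h1.symm
    _ = Phic cs hS (cs.wordProd (E z₁)) := m1.2
    _ = Phic cs hS (cs.wordProd (E z₂)) := by rw [h]
    _ = twProd cs star (E z₂) := m2.2.symm
    _ = z₂.1 := h2

end IUIM
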